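/- arXiv:1907.12167 — 10 statements merged into one kernel-verified Lean document; each statement's English description precedes it below -/
import Mathlib

section
/- Let P be a finite abelian p-group and H a finite p'-subgroup of Aut(P). Then P decomposes as the direct product P = [P,H] × C_P(H), where [P,H] is the commutator subgroup generated by elements x^{-1}·h(x) for x in P, h in H, and C_P(H) is the subgroup of fixed points of H. -/
/-- The subgroup of fixed points of a group `H` of automorphisms of `P`. -/
def fixedPointsSubgroup {P : Type*} [Group P] (H : Subgroup (MulAut P)) : Subgroup P where
  carrier := {x : P | ∀ h ∈ H, h x = x}
  one_mem' := by intro h _; simp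
  mul_mem' := by
    intro a b ha hb h hh
    simp [map_mul, ha h hh, hb h hh]
  inv_mem' := by
    intro a ha h hh
    simp [map_inv, ha h hh]

/-- The subgroup `[P, H]` generated by the elements `x⁻¹ * h x`. -/
def commutatorWithAut {P : Type*} [Group P] (H : Subgroup (MulAut P)) : Subgroup P :=
  Subgroup.closure {y : P | ∃ x : P, ∃ h ∈ H, y = x⁻¹ * h x}

/-- The "norm" homomorphism `x ↦ ∏_{h ∈ H} h x`. -/
def Tmap {P : Type*} [CommGroup P] (H : Subgroup (MulAut P)) [Fintype H] : P →* P where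
  toFun x := ∏ h : H, (h : MulAut P) x
  map_one' := by simp
  map_mul' x y := by simp [map_mul, Finset.prod_mul_distrib]

lemma Tmap_apply {P : Type*} [CommGroup P] (H : Subgroup (MulAut P)) [Fintype H] (x : P) :
    Tmap H x = ∏ h : H, (h : MulAut P) x := rfl

lemma Tmap_mem_fixed {P : Type*} [CommGroup P] (H : Subgroup (MulAut P)) [Fintype H] (x : P) :
    Tmap H x ∈ fixedPointsSubgroup H := by
  intro g hg
  have : g (Tmap H x) = ∏ h : H, ((⟨g, hg⟩ * h : H) : MulAut P) x := by
    simp [Tmap_apply, map_prod]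
  rw [this]
  exact Equiv.prod_comp (Equiv.mulLeft (⟨g, hg⟩ : H)) (fun h : H => (h : MulAut P) x)

lemma Tmap_aut {P : Type*} [CommGroup P] (H : Subgroup (MulAut P)) [Fintype H]
    (g : MulAut P) (hg : g ∈ H) (x : P) : Tmap H (g x) = Tmap H x := by
  have : Tmap H (g x) = ∏ h : H, ((h * ⟨g, hg⟩ : H) : MulAut P) x := rfl
  rw [this]
  exact Equiv.prod_comp (Equiv.mulRight (⟨g, hg⟩ : H)) (fun h : H => (h : MulAut P) x)

lemma Tmap_eq_one {P : Type*} [CommGroup P] (H : Subgroup (MulAut P)) [Fintype H]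
    {x : P} (hx : x ∈ commutatorWithAut H) : Tmap H x = 1 := by
  have hle : commutatorWithAut H ≤ (Tmap H).ker := by
    rw [commutatorWithAut, Subgroup.closure_le]
    rintro y ⟨z, h, hh, rfl⟩
    simp only [SetLike.mem_coe, MonoidHom.mem_ker, map_mul, map_inv]
    rw [Tmap_aut H h hh]
    simp
  exact hle hx

/-- for a finite abelian `p`-group `P` and a finite `p'`-group `H` of
automorphisms of `P`, we have `P = [P, H] × C_P(H)`. -/
theorem stmt0 (p : ℕ) (hp : p.Prime) (P : Type*) [CommGroup P] [Fintype P]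
    (hP : IsPGroup p P) (H : Subgroup (MulAut P)) [Fintype H]
    (hH : Nat.Coprime (Fintype.card H) p) :
    commutatorWithAut H ⊔ fixedPointsSubgroup H = ⊤ ∧
      commutatorWithAut H ⊓ fixedPointsSubgroup H = ⊥ := by
  set n := Fintype.card H with hn
  constructor
  · rw [eq_top_iff]
    intro x _
    haveI := Fact.mk hp
    obtain ⟨k, hk⟩ := IsPGroup.iff_card.mp hP
    have hco : (Nat.card P).Coprime n := by
      rw [hk]
      exact Nat.Coprime.pow_left k hH.symm
    set y := (powCoprime hco).symm x with hy
    have hyn : y ^ n = x := by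
      have := (powCoprime hco).apply_symm_apply x
      simpa [powCoprime, hy] using this
    have hc : (y⁻¹) ^ n * Tmap H y ∈ commutatorWithAut H := by
      have : (y⁻¹) ^ n * Tmap H y = ∏ h : H, (y⁻¹ * (h : MulAut P) y) := by
        rw [Finset.prod_mul_distrib, Finset.prod_const, Tmap_apply]
        simp [hn]
      rw [this]
      exact Subgroup.prod_mem _ fun h _ =>
        Subgroup.subset_closure ⟨y, (h : MulAut P), h.2, rfl⟩
    have hf : Tmap H y ∈ fixedPointsSubgroup H := Tmap_mem_fixed H y
    have hx : x = ((y⁻¹) ^ n * Tmap H y)⁻¹ * Tmap H y := by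
      rw [← hyn]
      simp [mul_inv_rev, inv_pow, mul_comm, mul_left_comm]
    rw [hx]
    exact mul_mem (Subgroup.mem_sup_left (inv_mem hc)) (Subgroup.mem_sup_right hf)
  · rw [eq_bot_iff]
    intro x hx
    obtain ⟨hx1, hx2⟩ := hx
    have h1 : Tmap H x = x ^ n := by
      rw [Tmap_apply]
      calc ∏ h : H, (h : MulAut P) x = ∏ _h : H, x := by
            apply Finset.prod_congr rfl
            intro h _
            exact hx2 h h.2
        _ = x ^ n := by simp [hn]
    have h2 : x ^ n = 1 := by rw [← h1, Tmap_eq_one H hx1]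
    obtain ⟨k, hk⟩ := hP x
    have hd1 : orderOf x ∣ n := orderOf_dvd_of_pow_eq_one h2
    have hd2 : orderOf x ∣ p ^ k := orderOf_dvd_of_pow_eq_one hk
    have hco : Nat.Coprime n (p ^ k) := Nat.Coprime.pow_right k hH
    have : orderOf x ∣ 1 := by
      have hd := Nat.dvd_gcd hd1 hd2
      rwa [hco] at hd
    simp only [Nat.dvd_one, orderOf_eq_one_iff] at this
    rw [Subgroup.mem_bot]
    exact this
end

section
/- Let P be a finite abelian p-group and H a finite p'-subgroup of Aut(P). The induced action of H on the character group Irr(P) = Hom(P, ℂ^×) has a non-trivial fixed point if and only if the action of H on P has a non-trivial fixed point. -/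
/-- An element of `ℂˣ` of `p`-power order killed by an exponent coprime to `p` is trivial. -/
lemma aux_unit_eq_one (p n : ℕ) (hp : p.Prime) (hn : Nat.Coprime n p) (u : ℂˣ)
    (k : ℕ) (hk : u ^ (p ^ k) = 1) (hu : u ^ n = 1) : u = 1 := by
  have hd1 : orderOf u ∣ n := orderOf_dvd_of_pow_eq_one hu
  have hd2 : orderOf u ∣ p ^ k := orderOf_dvd_of_pow_eq_one hk
  have hcop : Nat.Coprime n (p ^ k) := hn.pow_right k
  have : orderOf u ∣ Nat.gcd n (p ^ k) := Nat.dvd_gcd hd1 hd2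
  rw [Nat.Coprime.gcd_eq_one hcop, Nat.dvd_one] at this
  exact orderOf_eq_one_iff.mp this

/-- for a finite abelian `p`-group `P` and a finite `p'`-group `H ≤ Aut(P)`,
the action of `H` on the character group `Hom(P, ℂˣ)` has a non-trivial fixed point if and
only if the action of `H` on `P` does. -/
theorem stmt1 (p : ℕ) (hp : p.Prime) (P : Type*) [CommGroup P] [Fintype P]
    (hP : IsPGroup p P) (H : Subgroup (MulAut P)) [Fintype H]
    (hH : Nat.Coprime (Fintype.card H) p) :
    (∃ lam : P →* ℂˣ, lam ≠ 1 ∧ ∀ h ∈ H, ∀ x : P, lam (h x) = lam x) ↔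
      (∃ x : P, x ≠ 1 ∧ ∀ h ∈ H, h x = x) := by
  constructor
  · -- fixed character ⇒ fixed point, via the norm map x ↦ ∏_{h∈H} h x
    rintro ⟨lam, hlam, hfix⟩
    obtain ⟨y, hy⟩ : ∃ y : P, lam y ≠ 1 := by
      by_contra hall
      push_neg at hall
      exact hlam (MonoidHom.ext fun y => by simp [hall y])
    refine ⟨∏ h : H, (h : MulAut P) y, ?_, ?_⟩
    · intro hcontra
      have h1 : lam (∏ h : H, (h : MulAut P) y) = (lam y) ^ Fintype.card H := by
        rw [map_prod]
        have heq : ∀ h : H, lam ((h : MulAut P) y) = lam y := fun h => hfix _ h.2 y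
        simp [heq, Finset.prod_const, Finset.card_univ]
      rw [hcontra, map_one] at h1
      obtain ⟨k, hk⟩ := hP y
      have hk' : (lam y) ^ (p ^ k) = 1 := by rw [← map_pow, hk, map_one]
      exact hy (aux_unit_eq_one p (Fintype.card H) hp hH _ k hk' h1.symm)
    · intro g hg
      have : g (∏ h : H, (h : MulAut P) y) = ∏ h : H, (g * (h : MulAut P)) y := by
        rw [map_prod]
        rfl
      rw [this]
      calc ∏ h : H, (g * (h : MulAut P)) y
          = ∏ h : H, (((⟨g, hg⟩ : H) * h : H) : MulAut P) y := by rfl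
        _ = ∏ h : H, (h : MulAut P) y :=
            Equiv.prod_comp (Equiv.mulLeft (⟨g, hg⟩ : H)) fun h : H => (h : MulAut P) y
  · -- fixed point ⇒ fixed character, via the averaged character y ↦ ∏_{h∈H} μ (h y)
    rintro ⟨x, hx, hfixx⟩
    have hexp : NeZero (Monoid.exponent P) := ⟨Monoid.exponent_ne_zero_of_finite⟩
    obtain ⟨μ, hμ⟩ := CommGroup.exists_apply_ne_one_of_hasEnoughRootsOfUnity P ℂ hx
    refine ⟨∏ h : H, μ.comp (h : MulAut P).toMonoidHom, ?_, ?_⟩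
    · intro hcontra
      have h1 : (∏ h : H, μ.comp (h : MulAut P).toMonoidHom) x = (μ x) ^ Fintype.card H := by
        rw [MonoidHom.finset_prod_apply]
        have heq : ∀ h : H, μ ((h : MulAut P) x) = μ x := fun h => by rw [hfixx _ h.2]
        simp [heq, Finset.prod_const, Finset.card_univ]
      rw [hcontra] at h1
      simp only [MonoidHom.one_apply] at h1
      obtain ⟨k, hk⟩ := hP x
      have hk' : (μ x) ^ (p ^ k) = 1 := by rw [← map_pow, hk, map_one]
      exact hμ (aux_unit_eq_one p (Fintype.card H) hp hH _ k hk' h1.symm)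
    · intro g hg y
      rw [MonoidHom.finset_prod_apply, MonoidHom.finset_prod_apply]
      calc ∏ h : H, μ.comp (h : MulAut P).toMonoidHom (g y)
          = ∏ h : H, μ ((((h : H) * (⟨g, hg⟩ : H) : H) : MulAut P) y) := by
            refine Finset.prod_congr rfl fun h _ => ?_
            rfl
        _ = ∏ h : H, μ ((h : MulAut P) y) :=
            Equiv.prod_comp (Equiv.mulRight (⟨g, hg⟩ : H)) fun h : H => μ ((h : MulAut P) y)
        _ = ∏ h : H, μ.comp (h : MulAut P).toMonoidHom y := rfl
end

section
/- Let P be a finite abelian p-group and H a finite p'-subgroup of Aut(P) acting indecomposably on P (i.e., P admits no non-trivial H-invariant direct factor decomposition P = P₁ × P₂ with both factors non-trivial). If P is homocyclic, P ≅ (C_{p^n})^m, then the induced action of H on P/Φ(P) ≅ (C_p)^m is also indecomposable, where Φ(P) is the Frattini subgroup. -/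
open Subgroup

/-- A group `H` of automorphisms of `P` acts *decomposably* if there is a non-trivial direct
decomposition `P = P₁ × P₂` with both factors `H`-invariant. -/
def ActsDecomposably {P : Type*} [CommGroup P] (H : Subgroup (MulAut P)) : Prop :=
  ∃ P₁ P₂ : Subgroup P, P₁ ≠ ⊥ ∧ P₂ ≠ ⊥ ∧ P₁.IsComplement' P₂ ∧
    (∀ h ∈ H, ∀ x ∈ P₁, h x ∈ P₁) ∧ (∀ h ∈ H, ∀ x ∈ P₂, h x ∈ P₂)


lemma aux_ker_coatom {G : Type*} [CommGroup G] {p : ℕ} (hp : p.Prime)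
    (φ : G →* Multiplicative (ZMod p)) (hx : ∃ g, φ g ≠ 1) :
    IsCoatom (MonoidHom.ker φ) := by
  haveI := Fact.mk hp
  constructor
  · intro h
    obtain ⟨g, hg⟩ := hx
    exact hg (by have : g ∈ MonoidHom.ker φ := h ▸ mem_top g; rwa [MonoidHom.mem_ker] at this)
  · intro N hN
    obtain ⟨y, hyN, hy⟩ := SetLike.exists_of_lt hN
    rw [MonoidHom.mem_ker] at hy
    have hy' : Multiplicative.toAdd (φ y) ≠ 0 := fun h => hy (by
      have : φ y = Multiplicative.ofAdd 0 := by rw [← h]; rfl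
      simpa using this)
    rw [eq_top_iff]
    intro z _
    set c : ZMod p := Multiplicative.toAdd (φ z) * (Multiplicative.toAdd (φ y))⁻¹ with hc
    have hpow : φ y ^ c.val = Multiplicative.ofAdd ((c.val : ZMod p) * Multiplicative.toAdd (φ y)) := by
      conv_lhs => rw [show φ y = Multiplicative.ofAdd (Multiplicative.toAdd (φ y)) from rfl]
      rw [← ofAdd_nsmul, nsmul_eq_mul]
    have hker : z * (y ^ c.val)⁻¹ ∈ MonoidHom.ker φ := by
      rw [MonoidHom.mem_ker, map_mul, map_inv, map_pow, hpow, ZMod.natCast_zmod_val, hc,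
        mul_assoc, inv_mul_cancel₀ hy', mul_one, mul_inv_eq_one]
      exact Multiplicative.toAdd.injective (by simp)
    have hz : z = (z * (y ^ c.val)⁻¹) * y ^ c.val := by group
    rw [hz]
    exact mul_mem (hN.le hker) (pow_mem hyN _)

lemma aux_pow_mem_frattini {P : Type*} [CommGroup P] {p n : ℕ} (hn : 0 < n)
    (hexp : ∀ y : P, y ^ (p ^ n) = 1) (x : P) : x ^ p ∈ frattini P := by
  have key : ∀ M : Subgroup P, IsCoatom M → x ^ p ∈ M := by
    intro M hM
    by_contra hxM
    have hR : ¬ (powMonoidHom p : P →* P).range ≤ M := fun h => hxM (h ⟨x, rfl⟩)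
    have hsup : M ⊔ (powMonoidHom p : P →* P).range = ⊤ := by
      refine hM.2 _ (lt_of_le_of_ne le_sup_left ?_)
      intro h
      exact hR (h ▸ le_sup_right)
    set π := QuotientGroup.mk' M
    have hsurj : ∀ q : P ⧸ M, ∃ r, r ^ p = q := by
      intro q
      obtain ⟨z, hz⟩ := QuotientGroup.mk'_surjective M q
      have hq : q ∈ Subgroup.map π (M ⊔ (powMonoidHom p : P →* P).range) := by
        rw [hsup]; exact ⟨z, mem_top z, hz⟩
      rw [Subgroup.map_sup] at hq
      have hMbot : Subgroup.map π M = ⊥ := by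
        rw [eq_bot_iff]
        rintro q' hq'
        obtain ⟨w, hw, rfl⟩ := Subgroup.mem_map.mp hq'
        simp [π, QuotientGroup.eq_one_iff, hw]
      rw [hMbot, bot_sup_eq] at hq
      obtain ⟨w, ⟨v, rfl⟩, rfl⟩ := Subgroup.mem_map.mp hq
      exact ⟨π v, by simp [powMonoidHom]⟩
    have hiter : ∀ k : ℕ, ∀ q : P ⧸ M, ∃ r, r ^ (p ^ k) = q := by
      intro k
      induction k with
      | zero => exact fun q => ⟨q, by simp⟩
      | succ k ih =>
        intro q
        obtain ⟨r, hr⟩ := hsurj q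
        obtain ⟨s, hs⟩ := ih r
        exact ⟨s, by rw [pow_succ, pow_mul, hs, hr]⟩
    have htriv : ∀ q : P ⧸ M, q = 1 := by
      intro q
      obtain ⟨r, hr⟩ := hiter n q
      obtain ⟨z, hz⟩ := QuotientGroup.mk'_surjective M r
      rw [← hr, ← hz, ← map_pow, hexp z, map_one]
    have : M = ⊤ := by
      rw [eq_top_iff]; intro z _
      have := htriv (π z)
      rwa [QuotientGroup.mk'_apply, QuotientGroup.eq_one_iff] at this
    exact hM.1 this
  simp only [frattini, Order.radical, Set.mem_setOf_eq, Subgroup.mem_iInf]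
  exact key

lemma aux_frattini_le_pow {p n m : ℕ} (hp : p.Prime) (hn : 0 < n) {P : Type*} [CommGroup P]
    (ι : P ≃* (Fin m → Multiplicative (ZMod (p ^ n)))) {x : P} (hx : x ∈ frattini P) :
    ∃ y : P, y ^ p = x := by
  haveI : NeZero (p ^ n) := ⟨pow_ne_zero n hp.pos.ne'⟩
  by_contra h
  have hj : ∃ j, ¬ ∃ d : ZMod (p ^ n), p * d = Multiplicative.toAdd (ι x j) := by
    by_contra hall
    push_neg at hall
    choose d hd using hall
    apply h
    refine ⟨ι.symm (fun j => Multiplicative.ofAdd (d j)), ?_⟩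
    apply ι.injective
    rw [map_pow, MulEquiv.apply_symm_apply]
    funext j
    have hfp : ((fun j => Multiplicative.ofAdd (d j)) ^ p) j = Multiplicative.ofAdd (d j) ^ p := rfl
    rw [hfp, ← ofAdd_nsmul, nsmul_eq_mul, hd j]
    rfl
  obtain ⟨j, hj⟩ := hj
  set a := Multiplicative.toAdd (ι x j) with ha
  have hwz : ((a.val : ℕ) : ZMod p) ≠ 0 := by
    intro hz
    rw [ZMod.natCast_eq_zero_iff] at hz
    obtain ⟨k, hk⟩ := hz
    refine hj ⟨(k : ZMod (p ^ n)), ?_⟩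
    have hv := ZMod.natCast_zmod_val a
    rw [← hv, hk]
    push_cast
    ring
  let cast1 : Multiplicative (ZMod (p ^ n)) →* Multiplicative (ZMod p) :=
    AddMonoidHom.toMultiplicative ((ZMod.castHom (dvd_pow_self p hn.ne') (ZMod p)).toAddMonoidHom)
  let φ : P →* Multiplicative (ZMod p) :=
    cast1.comp ((Pi.evalMonoidHom (fun _ => Multiplicative (ZMod (p ^ n))) j).comp ι.toMonoidHom)
  have hφx : φ x ≠ 1 := by
    intro h1
    apply hwz
    have : Multiplicative.toAdd (φ x) = 0 := by rw [h1]; rfl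
    rw [show Multiplicative.toAdd (φ x) = (ZMod.castHom (dvd_pow_self p hn.ne') (ZMod p)) a from rfl] at this
    rwa [ZMod.castHom_apply, ← ZMod.natCast_val] at this
  have hco := aux_ker_coatom hp φ ⟨x, hφx⟩
  exact hφx (frattini_le_coatom hco hx)

lemma aux_newton1 {R : Type*} [Ring R] (g : R) :
    3 * g ^ 2 - 2 * g ^ 3 = g + (-(2 * g - 1) * (g * g - g)) := by noncomm_ring

lemma aux_newton2 {R : Type*} [Ring R] (g : R) :
    (3 * g ^ 2 - 2 * g ^ 3) * (3 * g ^ 2 - 2 * g ^ 3) - (3 * g ^ 2 - 2 * g ^ 3)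
      = (g * g - g) * ((g * g - g) * (4 * (g * g - g) - 3)) := by noncomm_ring

set_option maxHeartbeats 1000000 in
/-- if a `p'`-group `H ≤ Aut(P)` acts indecomposably on the homocyclic
abelian `p`-group `P ≅ (C_{p^n})^m`, then the induced action of `H` on `P/Φ(P)` is also
indecomposable. -/
theorem stmt2 (p : ℕ) (hp : p.Prime) (m n : ℕ) (hm : 0 < m) (hn : 0 < n)
    (P : Type*) [CommGroup P] [Fintype P]
    (hhomo : Nonempty (P ≃* (Fin m → Multiplicative (ZMod (p ^ n)))))
    (H : Subgroup (MulAut P)) [Fintype H] (hH : Nat.Coprime (Fintype.card H) p)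
    (hindec : ¬ ActsDecomposably H) :
    ¬ ∃ Q₁ Q₂ : Subgroup (P ⧸ frattini P), Q₁ ≠ ⊥ ∧ Q₂ ≠ ⊥ ∧ Q₁.IsComplement' Q₂ ∧
      (∀ h ∈ H, ∀ x : P, (x : P ⧸ frattini P) ∈ Q₁ → ((h x : P) : P ⧸ frattini P) ∈ Q₁) ∧
      (∀ h ∈ H, ∀ x : P, (x : P ⧸ frattini P) ∈ Q₂ → ((h x : P) : P ⧸ frattini P) ∈ Q₂) := by
  classical
  rintro ⟨Q₁, Q₂, hQ₁, hQ₂, hcompl, hinv₁, hinv₂⟩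
  obtain ⟨ι⟩ := hhomo
  haveI : NeZero (p ^ n) := ⟨pow_ne_zero n hp.pos.ne'⟩
  have hpn1 : 1 < p ^ n := Nat.one_lt_pow hn.ne' hp.one_lt
  -- exponent of P is p^n
  have hexp : ∀ y : P, y ^ (p ^ n) = 1 := by
    intro y
    apply ι.injective
    rw [map_pow, map_one]
    funext j
    show (ι y j) ^ (p ^ n) = 1
    have h1 : (ι y j) ^ (p ^ n)
        = Multiplicative.ofAdd ((p ^ n : ℕ) • Multiplicative.toAdd (ι y j)) := by
      rw [ofAdd_nsmul]; rfl
    rw [h1, nsmul_eq_mul, ZMod.natCast_self, zero_mul]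
    rfl
  set π : P →* P ⧸ frattini P := QuotientGroup.mk' (frattini P) with hπdef
  have hπs := QuotientGroup.mk'_surjective (frattini P)
  have hGexp : ∀ q : P ⧸ frattini P, q ^ (p ^ n) = 1 := by
    intro q; obtain ⟨x, rfl⟩ := hπs q; rw [← map_pow, hexp, map_one]
  have hπp : ∀ y : P, π (y ^ p) = 1 := fun y =>
    (QuotientGroup.eq_one_iff _).mpr (aux_pow_mem_frattini hn hexp y)
  -- the projection e onto Q₁ along Q₂
  set e : (P ⧸ frattini P) → (P ⧸ frattini P) := fun g => ((hcompl.equiv g).1 : P ⧸ frattini P)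
    with hedef
  have hdec : ∀ g, e g ∈ Q₁ ∧ (e g)⁻¹ * g ∈ Q₂ := by
    intro g
    constructor
    · exact (hcompl.equiv g).1.2
    · have hmul := hcompl.equiv_fst_mul_equiv_snd g
      have h2 : (e g)⁻¹ * g = ((hcompl.equiv g).2 : P ⧸ frattini P) :=
        (hcompl.equiv_snd_eq_inv_mul g).symm
      rw [h2]
      exact (hcompl.equiv g).2.2
  have he_mem : ∀ g, e g ∈ Q₁ := fun g => (hdec g).1
  have huniq : ∀ (g a b : P ⧸ frattini P), a ∈ Q₁ → b ∈ Q₂ → a * b = g → e g = a := by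
    intro g a b haq hbq hab
    set pr : ↥(Q₁ : Set (P ⧸ frattini P)) × ↥(Q₂ : Set (P ⧸ frattini P)) :=
      (⟨a, haq⟩, ⟨b, hbq⟩) with hpr
    have hprab : (pr.1 : P ⧸ frattini P) * (pr.2 : P ⧸ frattini P) = g := hab
    have h1 := (hcompl.existsUnique g).unique (hcompl.equiv_fst_mul_equiv_snd g) hprab
    exact congrArg (fun z => (z.1 : P ⧸ frattini P)) h1
  have he_mul : ∀ g₁ g₂, e (g₁ * g₂) = e g₁ * e g₂ := by
    intro g₁ g₂
    refine huniq _ _ ((((e g₁)⁻¹ * g₁)) * (((e g₂)⁻¹ * g₂)))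
      (mul_mem (he_mem g₁) (he_mem g₂)) (mul_mem (hdec g₁).2 (hdec g₂).2) ?_
    rw [mul_mul_mul_comm, mul_inv_cancel_left, mul_inv_cancel_left]
  have heQ₁ : ∀ a ∈ Q₁, e a = a := fun a ha => huniq a a 1 ha (one_mem _) (mul_one a)
  have heQ₂ : ∀ b ∈ Q₂, e b = 1 := fun b hb => huniq b 1 b (one_mem _) hb (one_mul b)
  have heidem : ∀ g, e (e g) = e g := fun g => heQ₁ _ (he_mem g)
  set eM : (P ⧸ frattini P) →* (P ⧸ frattini P) := MonoidHom.mk' e he_mul with heM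
  -- induced automorphisms on the quotient
  have hchar : ∀ h : MulAut P, frattini P ≤ (frattini P).comap h.toMonoidHom := by
    intro h
    exact Subgroup.characteristic_iff_le_comap.mp inferInstance h
  set hbar : MulAut P → (P ⧸ frattini P) →* (P ⧸ frattini P) :=
    fun h => QuotientGroup.map (frattini P) (frattini P) h.toMonoidHom (hchar h) with hhbar
  have hbar_mk : ∀ (h : MulAut P) (x : P), hbar h (π x) = π (h x) := by
    intro h x
    exact QuotientGroup.map_mk (frattini P) (frattini P) h.toMonoidHom (hchar h) x
  have hbarQ₁ : ∀ h ∈ H, ∀ q ∈ Q₁, hbar h q ∈ Q₁ := by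
    intro h hh q hq
    obtain ⟨x, rfl⟩ := hπs q
    rw [hbar_mk]
    exact hinv₁ h hh x hq
  have hbarQ₂ : ∀ h ∈ H, ∀ q ∈ Q₂, hbar h q ∈ Q₂ := by
    intro h hh q hq
    obtain ⟨x, rfl⟩ := hπs q
    rw [hbar_mk]
    exact hinv₂ h hh x hq
  have hecomm : ∀ h ∈ H, ∀ g, e (hbar h g) = hbar h (e g) := by
    intro h hh g
    refine huniq _ _ (hbar h ((e g)⁻¹ * g)) (hbarQ₁ h hh _ (he_mem g)) (hbarQ₂ h hh _ (hdec g).2) ?_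
    rw [← map_mul, mul_inv_cancel_left]
  have hbar_inv_cancel : ∀ (h : MulAut P) (q : P ⧸ frattini P), hbar h (hbar h⁻¹ q) = q := by
    intro h q
    obtain ⟨x, rfl⟩ := hπs q
    rw [hbar_mk, hbar_mk]
    congr 1
    exact h.apply_symm_apply x
  -- lifting e to an endomorphism of P
  set s : Fin m → P := fun j => ι.symm (Pi.mulSingle j (Multiplicative.ofAdd (1 : ZMod (p ^ n))))
    with hs
  have hwex : ∀ j, ∃ y, π y = e (π (s j)) := fun j => hπs _
  choose w hw using hwex
  have hpowcong : ∀ (y : P) (k l : ℕ), k % (p ^ n) = l % (p ^ n) → y ^ k = y ^ l := by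
    intro y k l hkl
    rw [pow_eq_pow_mod k (hexp y), pow_eq_pow_mod l (hexp y), hkl]
  set et : P → P := fun x => ∏ j, w j ^ ((Multiplicative.toAdd (ι x j)).val) with het
  have het_mul : ∀ x y, et (x * y) = et x * et y := by
    intro x y
    rw [het]
    simp only [← Finset.prod_mul_distrib]
    refine Finset.prod_congr rfl fun j _ => ?_
    rw [← pow_add]
    apply hpowcong
    rw [map_mul]
    show (Multiplicative.toAdd (ι x j * ι y j)).val % (p ^ n) = _
    rw [show Multiplicative.toAdd (ι x j * ι y j)
      = Multiplicative.toAdd (ι x j) + Multiplicative.toAdd (ι y j) from rfl, ZMod.val_add]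
    exact Nat.mod_mod_of_dvd _ dvd_rfl
  have hprod : ∀ x : P, ∏ j, s j ^ ((Multiplicative.toAdd (ι x j)).val) = x := by
    intro x
    apply ι.injective
    rw [map_prod]
    funext i
    rw [Finset.prod_apply]
    have hterm : ∀ j, (ι (s j ^ ((Multiplicative.toAdd (ι x j)).val))) i
        = (Pi.mulSingle j (Multiplicative.ofAdd (1 : ZMod (p ^ n))) :
            ∀ _ : Fin m, Multiplicative (ZMod (p ^ n))) i
          ^ ((Multiplicative.toAdd (ι x j)).val) := by
      intro j
      rw [map_pow, hs, MulEquiv.apply_symm_apply]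
      rfl
    rw [Finset.prod_congr rfl (fun j _ => hterm j)]
    rw [Finset.prod_eq_single i (fun j _ hj => by
      rw [Pi.mulSingle_eq_of_ne (Ne.symm hj), one_pow]) (fun hi => absurd (Finset.mem_univ i) hi)]
    rw [Pi.mulSingle_eq_same]
    have : (Multiplicative.ofAdd (1 : ZMod (p ^ n))) ^ ((Multiplicative.toAdd (ι x i)).val)
        = Multiplicative.ofAdd (((Multiplicative.toAdd (ι x i)).val : ZMod (p ^ n)) * 1) := by
      rw [← ofAdd_nsmul, nsmul_eq_mul]
    rw [this, mul_one, ZMod.natCast_zmod_val]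
    rfl
  have hlift : ∀ x, π (et x) = e (π x) := by
    intro x
    conv_rhs => rw [← hprod x]
    have hv : π (∏ j, s j ^ ((Multiplicative.toAdd (ι x j)).val))
        = ∏ j, (π (s j)) ^ ((Multiplicative.toAdd (ι x j)).val) := by
      rw [map_prod]
      exact Finset.prod_congr rfl fun j _ => map_pow π _ _
    simp only [het]
    calc π (∏ j, w j ^ ((Multiplicative.toAdd (ι x j)).val))
        = ∏ j, eM ((π (s j)) ^ ((Multiplicative.toAdd (ι x j)).val)) := by
          rw [map_prod]
          refine Finset.prod_congr rfl fun j _ => ?_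
          rw [map_pow, hw j, show e (π (s j)) = eM (π (s j)) from rfl, ← map_pow]
      _ = eM (∏ j, (π (s j)) ^ ((Multiplicative.toAdd (ι x j)).val)) := (map_prod eM _ _).symm
      _ = eM (π (∏ j, s j ^ ((Multiplicative.toAdd (ι x j)).val))) := by rw [hv]
      _ = e (π (∏ j, s j ^ ((Multiplicative.toAdd (ι x j)).val))) := rfl
  -- inverse of |H| mod p^n
  have hcop : Nat.Coprime (Fintype.card H) (p ^ n) := hH.pow_right n
  have hunit : IsUnit ((Fintype.card H : ℕ) : ZMod (p ^ n)) :=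
    (ZMod.isUnit_iff_coprime _ _).mpr hcop
  set u : ℕ := ((hunit.unit⁻¹ : (ZMod (p ^ n))ˣ) : ZMod (p ^ n)).val with hu
  have huc : (Fintype.card H * u) % (p ^ n) = 1 % (p ^ n) := by
    have hcast : ((Fintype.card H * u : ℕ) : ZMod (p ^ n)) = ((1 : ℕ) : ZMod (p ^ n)) := by
      push_cast
      rw [hu, ZMod.natCast_zmod_val]
      nth_rewrite 1 [← IsUnit.unit_spec hunit]
      exact_mod_cast Units.mul_inv hunit.unit
    rwa [ZMod.natCast_eq_natCast_iff] at hcast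
  have h1mod : 1 % (p ^ n) = 1 := Nat.mod_eq_of_lt hpn1
  have hpowHcard : ∀ q : P ⧸ frattini P, (q ^ (Fintype.card H)) ^ u = q := by
    intro q
    rw [← pow_mul, pow_eq_pow_mod _ (hGexp q), huc, h1mod, pow_one]
  -- the averaged lift F
  set etM : P →* P := MonoidHom.mk' et het_mul with hetM
  set F : P →* P :=
    ((∏ g : H, ((g : MulAut P).toMonoidHom.comp
      (etM.comp ((g⁻¹ : H) : MulAut P).toMonoidHom))) ^ u) with hF
  have hFapply : ∀ x : P,
      F x = (∏ g : H, (g : MulAut P) (et (((g⁻¹ : H) : MulAut P) x))) ^ u := by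
    intro x
    rw [hF]
    rw [MonoidHom.pow_apply, MonoidHom.finset_prod_apply]
    rfl
  have hFπ : ∀ x, π (F x) = e (π x) := by
    intro x
    rw [hFapply, map_pow, map_prod]
    have hterm : ∀ g : H, π ((g : MulAut P) (et (((g⁻¹ : H) : MulAut P) x))) = e (π x) := by
      intro g
      simp only [InvMemClass.coe_inv]
      rw [← hbar_mk, hlift, ← hbar_mk, hecomm _ (inv_mem g.2), hbar_inv_cancel]
    rw [Finset.prod_congr rfl (fun g _ => hterm g), Finset.prod_const, Finset.card_univ,
      hpowHcard]
  have hFcomm : ∀ h : MulAut P, h ∈ H → ∀ x, h (F x) = F (h x) := by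
    intro h hh x
    rw [hFapply, hFapply, map_pow, map_prod]
    congr 1
    refine Fintype.prod_equiv (Equiv.mulLeft (⟨h, hh⟩ : H)) _ _ ?_
    intro g
    show h ((g : MulAut P) (et (((g⁻¹ : H) : MulAut P) x)))
      = (((⟨h, hh⟩ * g : H) : MulAut P)) (et ((((⟨h, hh⟩ * g : H)⁻¹ : H) : MulAut P) (h x)))
    have h1 : (((⟨h, hh⟩ * g : H)⁻¹ : H) : MulAut P) (h x) = ((g⁻¹ : H) : MulAut P) x := by
      simp only [mul_inv_rev]
      show ((g⁻¹ : H) : MulAut P) (((⟨h, hh⟩⁻¹ : H) : MulAut P) (h x)) = _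
      congr 1
      show (h⁻¹ : MulAut P) (h x) = x
      exact h.symm_apply_apply x
    rw [h1]
    rfl
  -- move to the endomorphism ring of the additive version of P
  set τ : MulAut P → AddMonoid.End (Additive P) :=
    fun h => MonoidHom.toAdditive h.toMonoidHom with hτ
  set f : AddMonoid.End (Additive P) := MonoidHom.toAdditive F with hf
  -- the "divisible by p^t" predicate
  set Jp : ℕ → AddMonoid.End (Additive P) → Prop :=
    fun t r => ∀ a, ∃ b, r a = (p ^ t) • b with hJpdef
  have hJp_left : ∀ {t : ℕ} {r r' : AddMonoid.End (Additive P)}, Jp t r' → Jp t (r * r') := by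
    intro t r r' hr' a
    obtain ⟨b, hb⟩ := hr' a
    exact ⟨r b, by rw [show (r * r') a = r (r' a) from rfl, hb, map_nsmul]⟩
  have hJp_right : ∀ {t : ℕ} {r r' : AddMonoid.End (Additive P)}, Jp t r → Jp t (r * r') := by
    intro t r r' hr a
    exact hr (r' a)
  have hJp_mul : ∀ {s t : ℕ} {r r' : AddMonoid.End (Additive P)},
      Jp s r → Jp t r' → Jp (s + t) (r * r') := by
    intro s t r r' hr hr' a
    obtain ⟨b, hb⟩ := hr' a
    obtain ⟨c, hc⟩ := hr b
    refine ⟨c, ?_⟩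
    rw [show (r * r') a = r (r' a) from rfl, hb, map_nsmul, hc, smul_smul,
      ← pow_add, add_comm t s]
  have hJp_anti : ∀ {s t : ℕ} {r : AddMonoid.End (Additive P)}, Jp (s + t) r → Jp s r := by
    intro s t r hr a
    obtain ⟨b, hb⟩ := hr a
    exact ⟨(p ^ t) • b, by rw [hb, smul_smul, ← pow_add]⟩
  have hJp_zero : ∀ {t : ℕ} {r : AddMonoid.End (Additive P)}, n ≤ t → Jp t r → r = 0 := by
    intro t r ht hr
    apply AddMonoidHom.ext
    intro a
    obtain ⟨b, hb⟩ := hr a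
    show r a = 0
    rw [hb]
    show (p ^ t) • b = 0
    have h1 : Additive.toMul ((p ^ t) • b) = (Additive.toMul b) ^ (p ^ t) := rfl
    have h2 : (Additive.toMul b) ^ (p ^ t) = 1 := by
      have h3 : p ^ t = p ^ n * p ^ (t - n) := by rw [← pow_add, Nat.add_sub_cancel' ht]
      rw [h3, pow_mul, hexp, one_pow]
    have := h1.trans h2
    exact Additive.toMul.injective this
  -- compatibility with the projection to the quotient
  set Pe : AddMonoid.End (Additive P) → Prop :=
    fun r => ∀ x : P, π (Additive.toMul (r (Additive.ofMul x))) = e (π x) with hPedef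
  have hPef : Pe f := fun x => hFπ x
  have hPeJ : ∀ {r : AddMonoid.End (Additive P)}, Pe r → Jp 1 (r * r - r) := by
    intro r hr a
    set x := Additive.toMul a with hx
    set y := Additive.toMul (r (Additive.ofMul x)) with hy
    have h1 : π y = e (π x) := hr x
    have h2 : π (Additive.toMul (r (Additive.ofMul y))) = e (π y) := hr y
    have hmem : Additive.toMul ((r * r - r) a) ∈ frattini P := by
      have hval : π (Additive.toMul ((r * r - r) a)) = 1 := by
        have hz : Additive.toMul ((r * r - r) a) = Additive.toMul (r (Additive.ofMul y)) / y :=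
          rfl
        rw [hz, map_div, h2, h1, heidem, ← h1, div_self']
      exact (QuotientGroup.eq_one_iff _).mp hval
    obtain ⟨z, hz⟩ := aux_frattini_le_pow hp hn ι hmem
    refine ⟨Additive.ofMul z, ?_⟩
    apply Additive.toMul.injective
    rw [← hz, pow_one]
    rfl
  have hPe_add : ∀ {r r' : AddMonoid.End (Additive P)}, Pe r → Jp 1 r' → Pe (r + r') := by
    intro r r' hr hj x
    obtain ⟨b, hb⟩ := hj (Additive.ofMul x)
    have h1 : Additive.toMul ((r + r') (Additive.ofMul x))
        = Additive.toMul (r (Additive.ofMul x)) * Additive.toMul (r' (Additive.ofMul x)) := rfl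
    have h2 : Additive.toMul (r' (Additive.ofMul x)) = (Additive.toMul b) ^ p := by
      rw [hb]; rw [pow_one]; rfl
    rw [h1, map_mul, h2, hπp, mul_one]
    exact hr x
  -- the Newton iteration
  set E : ℕ → AddMonoid.End (Additive P) :=
    fun k => Nat.rec f (fun _ g => 3 * g ^ 2 - 2 * g ^ 3) k with hE
  have hE0 : E 0 = f := rfl
  have hEs : ∀ k, E (k + 1) = 3 * (E k) ^ 2 - 2 * (E k) ^ 3 := fun k => rfl
  have hEJ : ∀ k, Jp (2 ^ k) ((E k) * (E k) - E k) := by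
    intro k
    induction k with
    | zero => exact hPeJ hPef
    | succ k ih =>
      have hid : E (k + 1) * E (k + 1) - E (k + 1)
          = ((E k) * (E k) - E k) * (((E k) * (E k) - E k)
            * (4 * ((E k) * (E k) - E k) - 3)) := by
        rw [hEs]
        exact aux_newton2 (E k)
      rw [hid, show (2 : ℕ) ^ (k + 1) = 2 ^ k + 2 ^ k by rw [pow_succ]; omega]
      exact hJp_mul ih (hJp_right ih)
  have hEPe : ∀ k, Pe (E k) := by
    intro k
    induction k with
    | zero => exact hPef
    | succ k ih =>
      have hid : E (k + 1) = E k + (-(2 * (E k) - 1) * ((E k) * (E k) - E k)) := by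
        rw [hEs]
        exact aux_newton1 (E k)
      rw [hid]
      refine hPe_add ih ?_
      have h2 : Jp (2 ^ k) (-(2 * (E k) - 1) * ((E k) * (E k) - E k)) := hJp_left (hEJ k)
      have h3 : (2 : ℕ) ^ k = 1 + (2 ^ k - 1) := by
        have := Nat.one_le_two_pow (n := k); omega
      rw [h3] at h2
      exact hJp_anti h2
  have hEcomm : ∀ h : MulAut P, h ∈ H → ∀ k, Commute (τ h) (E k) := by
    intro h hh
    have hbase : Commute (τ h) f := by
      show τ h * f = f * τ h
      apply AddMonoidHom.ext
      intro a
      show τ h (f a) = f (τ h a)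
      have h1 : τ h (f a) = Additive.ofMul (h (F (Additive.toMul a))) := rfl
      have h2 : f (τ h a) = Additive.ofMul (F (h (Additive.toMul a))) := rfl
      rw [h1, h2, hFcomm h hh]
    intro k
    induction k with
    | zero => exact hbase
    | succ k ih =>
      rw [hEs]
      have h3 : Commute (τ h) (3 : AddMonoid.End (Additive P)) := by
        rw [← Nat.cast_ofNat (R := AddMonoid.End (Additive P)) (n := 3)]
        exact (Nat.cast_commute 3 _).symm
      have h2 : Commute (τ h) (2 : AddMonoid.End (Additive P)) := by
        rw [← Nat.cast_ofNat (R := AddMonoid.End (Additive P)) (n := 2)]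
        exact (Nat.cast_commute 2 _).symm
      exact (h3.mul_right (ih.pow_right 2)).sub_right (h2.mul_right (ih.pow_right 3))
  -- the idempotent endomorphism lifting e
  have hnle : n ≤ 2 ^ n := Nat.le_of_lt (Nat.lt_two_pow_self)
  have hidem0 : E n * E n - E n = 0 := hJp_zero hnle (hEJ n)
  have hidem : E n * E n = E n := by rwa [sub_eq_zero] at hidem0
  set EF : P → P := fun x => Additive.toMul (E n (Additive.ofMul x)) with hEFdef
  have hEFmul : ∀ x y, EF (x * y) = EF x * EF y := by
    intro x y
    show Additive.toMul (E n (Additive.ofMul x + Additive.ofMul y)) = _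
    rw [map_add]
    rfl
  have hEFone : EF 1 = 1 := by
    show Additive.toMul (E n (0 : Additive P)) = 1
    rw [map_zero]
    rfl
  have hEFinv : ∀ x, EF x⁻¹ = (EF x)⁻¹ := by
    intro x
    show Additive.toMul (E n (-(Additive.ofMul x))) = _
    rw [map_neg]
    rfl
  have hEFidem : ∀ x, EF (EF x) = EF x := by
    intro x
    show Additive.toMul (E n (E n (Additive.ofMul x))) = _
    rw [show E n (E n (Additive.ofMul x)) = (E n * E n) (Additive.ofMul x) from rfl, hidem]
  have hEFcomm : ∀ h : MulAut P, h ∈ H → ∀ x, EF (h x) = h (EF x) := by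
    intro h hh x
    have hc := hEcomm h hh n
    have h1 : (τ h * E n) (Additive.ofMul x) = (E n * τ h) (Additive.ofMul x) := by rw [hc.eq]
    have h2 : τ h (E n (Additive.ofMul x)) = E n (τ h (Additive.ofMul x)) := h1
    show Additive.toMul (E n (τ h (Additive.ofMul x))) = h (Additive.toMul (E n (Additive.ofMul x)))
    rw [← h2]
    rfl
  have hEFπ : ∀ x, π (EF x) = e (π x) := hEPe n
  -- the subgroups P₁ and P₂
  set P₁ : Subgroup P :=
    { carrier := {x | EF x = x}
      mul_mem' := by
        intro a b ha hb
        simp only [Set.mem_setOf_eq] at *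
        rw [hEFmul, ha, hb]
      one_mem' := hEFone
      inv_mem' := by
        intro a ha
        simp only [Set.mem_setOf_eq] at *
        rw [hEFinv, ha] } with hP₁def
  set P₂ : Subgroup P :=
    { carrier := {x | EF x = 1}
      mul_mem' := by
        intro a b ha hb
        simp only [Set.mem_setOf_eq] at *
        rw [hEFmul, ha, hb, one_mul]
      one_mem' := hEFone
      inv_mem' := by
        intro a ha
        simp only [Set.mem_setOf_eq] at *
        rw [hEFinv, ha, inv_one] } with hP₂def
  have hmemP₁ : ∀ x : P, x ∈ P₁ ↔ EF x = x := fun x => Iff.rfl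
  have hmemP₂ : ∀ x : P, x ∈ P₂ ↔ EF x = 1 := fun x => Iff.rfl
  have hPcompl : P₁.IsComplement' P₂ := by
    apply Subgroup.isComplement_iff_existsUnique.mpr
    intro g
    refine ⟨⟨⟨EF g, hEFidem g⟩, ⟨(EF g)⁻¹ * g, ?_⟩⟩, ?_, ?_⟩
    · show EF ((EF g)⁻¹ * g) = 1
      rw [hEFmul, hEFinv, hEFidem, inv_mul_cancel]
    · show EF g * ((EF g)⁻¹ * g) = g
      rw [mul_inv_cancel_left]
    · rintro ⟨⟨a, (ha : EF a = a)⟩, ⟨b, (hb : EF b = 1)⟩⟩ (hab : a * b = g)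
      have h1 : EF g = a := by rw [← hab, hEFmul, ha, hb, mul_one]
      have h2 : b = (EF g)⁻¹ * g := by rw [h1, ← hab, inv_mul_cancel_left]
      refine Prod.ext (Subtype.ext ?_) (Subtype.ext ?_)
      · exact h1.symm
      · exact h2
  have hP₁ne : P₁ ≠ ⊥ := by
    obtain ⟨⟨q, hq⟩, hq1⟩ := Subgroup.ne_bot_iff_exists_ne_one.mp hQ₁
    have hqne : q ≠ 1 := fun h => hq1 (Subtype.ext h)
    obtain ⟨x, rfl⟩ := hπs q
    rw [Subgroup.ne_bot_iff_exists_ne_one]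
    refine ⟨⟨EF x, hEFidem x⟩, ?_⟩
    intro hc
    have hc2 : EF x = 1 := by
      have := congrArg (Subtype.val) hc
      exact this
    have h3 : π (EF x) = 1 := by rw [hc2, map_one]
    rw [hEFπ, heQ₁ _ hq] at h3
    exact hqne h3
  have hP₂ne : P₂ ≠ ⊥ := by
    obtain ⟨⟨q, hq⟩, hq1⟩ := Subgroup.ne_bot_iff_exists_ne_one.mp hQ₂
    have hqne : q ≠ 1 := fun h => hq1 (Subtype.ext h)
    obtain ⟨x, rfl⟩ := hπs q
    rw [Subgroup.ne_bot_iff_exists_ne_one]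
    have hz : EF ((EF x)⁻¹ * x) = 1 := by
      rw [hEFmul, hEFinv, hEFidem, inv_mul_cancel]
    refine ⟨⟨(EF x)⁻¹ * x, hz⟩, ?_⟩
    intro hc
    have hc2 : (EF x)⁻¹ * x = 1 := congrArg Subtype.val hc
    have h3 : π ((EF x)⁻¹ * x) = 1 := by rw [hc2, map_one]
    rw [map_mul, map_inv, hEFπ, heQ₂ _ hq, inv_one, one_mul] at h3
    exact hqne h3
  apply hindec
  refine ⟨P₁, P₂, hP₁ne, hP₂ne, hPcompl, ?_, ?_⟩
  · intro h hh x hx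
    have hx1 : EF x = x := hx
    show EF (h x) = h x
    rw [hEFcomm h hh, hx1]
  · intro h hh x hx
    have hx1 : EF x = 1 := hx
    show EF (h x) = 1
    rw [hEFcomm h hh, hx1, map_one]
end

section
/- Let P be a finite abelian group of exponent dividing p^n, let O be a complete discrete valuation ring of characteristic 0 with residue field of characteristic p, and let J_O(P) be the augmentation ideal of OP. Then for every x ∈ J_O(P), one has x^{p^n} ∈ p·J_O(P). -/
lemma stmt6_aux_apply {k G : Type*} [Semiring k] [Fintype G] [DecidableEq G] (c : G → k) (h : G) :
    (∑ g : G, MonoidAlgebra.single g (c g)).coeff h = c h := by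
  rw [MonoidAlgebra.coeff_sum, Finsupp.finset_sum_apply]
  simp [MonoidAlgebra.coeff_single, Finsupp.single_apply]

lemma stmt6_aux_sum_single {k G : Type*} [Semiring k] [Fintype G] [DecidableEq G]
    (f : MonoidAlgebra k G) : ∑ g : G, MonoidAlgebra.single g (f.coeff g) = f := by
  ext h; rw [stmt6_aux_apply]

/-- let `P` be a finite abelian group of exponent dividing `p^n` and `O` a
complete discrete valuation ring of characteristic `0` and residue characteristic `p`.
Then every element `x` of the augmentation ideal `J_O(P)` of `OP` satisfies
`x ^ (p ^ n) ∈ p · J_O(P)`. -/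
theorem stmt6 (p n : ℕ) (hp : p.Prime) (O : Type*) [CommRing O] [IsDomain O]
    [IsDiscreteValuationRing O] [CharZero O]
    [IsAdicComplete (IsLocalRing.maximalIdeal O) O]
    (hpO : ¬ IsUnit (p : O))
    (P : Type*) [CommGroup P] [Fintype P] (hP : ∀ x : P, x ^ (p ^ n) = 1) :
    ∀ x ∈ RingHom.ker ((MonoidAlgebra.lift O O P) 1).toRingHom,
      ∃ y ∈ RingHom.ker ((MonoidAlgebra.lift O O P) 1).toRingHom,
        x ^ (p ^ n) = (p : MonoidAlgebra O P) * y := by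
  classical
  intro x hx
  haveI : Fact p.Prime := ⟨hp⟩
  set ε := ((MonoidAlgebra.lift O O P) 1).toRingHom with hεdef
  have hεsingle : ∀ (g : P) (a : O), ε (MonoidAlgebra.single g a) = a := by
    intro g a
    simp [hεdef, MonoidAlgebra.lift_single]
  set S := O ⧸ (Ideal.span {(p : O)} : Ideal O) with hSdef
  haveI hSp : CharP S p := CharP.quotient O p hpO
  set mk : O →+* S := Ideal.Quotient.mk _ with hmkdef
  have hmkalg : (algebraMap O S) = mk := Ideal.Quotient.algebraMap_eq _
  set φ : MonoidAlgebra O P →ₐ[O] MonoidAlgebra S P :=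
    MonoidAlgebra.lift O (MonoidAlgebra S P) P (MonoidAlgebra.of S P) with hφdef
  have hφsingle : ∀ (g : P) (a : O),
      φ (MonoidAlgebra.single g a) = MonoidAlgebra.single g (mk a) := by
    intro g a
    rw [hφdef, MonoidAlgebra.lift_single, MonoidAlgebra.of_apply,
      MonoidAlgebra.smul_single, ← Algebra.algebraMap_eq_smul_one, hmkalg]
  have hφx : ∀ f : MonoidAlgebra O P,
      φ f = ∑ g : P, MonoidAlgebra.single g (mk (f.coeff g)) := by
    intro f
    conv_lhs => rw [← stmt6_aux_sum_single f]
    rw [map_sum]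
    simp only [hφsingle]
  have hφcoeff : ∀ (f : MonoidAlgebra O P) (g : P), (φ f).coeff g = mk (f.coeff g) := by
    intro f g
    rw [hφx f, stmt6_aux_apply]
  haveI : CharP (MonoidAlgebra S P) p :=
    charP_of_injective_ringHom
      (f := (MonoidAlgebra.singleOneRingHom : S →+* MonoidAlgebra S P))
      (fun a b h => by
        simpa using MonoidAlgebra.single_right_injective (m := (1 : P)) h) p
  have hxsum : ∑ g : P, x.coeff g = 0 := by
    have h0 : ε x = 0 := hx
    conv_lhs at h0 => rw [← stmt6_aux_sum_single x]
    rw [map_sum] at h0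
    simpa [hεsingle] using h0
  have key : φ (x ^ p ^ n) = 0 := by
    rw [map_pow]
    calc φ x ^ p ^ n
        = iterateFrobenius (MonoidAlgebra S P) p n (φ x) := rfl
      _ = ∑ g : P, iterateFrobenius (MonoidAlgebra S P) p n
            (MonoidAlgebra.single g (mk (x.coeff g))) := by rw [hφx, map_sum]
      _ = ∑ g : P, MonoidAlgebra.single (1 : P)
            (iterateFrobenius S p n (mk (x.coeff g))) := by
          refine Finset.sum_congr rfl fun g _ => ?_
          rw [iterateFrobenius_def, MonoidAlgebra.single_pow, hP g,
            iterateFrobenius_def]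
      _ = MonoidAlgebra.single (1 : P)
            (iterateFrobenius S p n (mk (∑ g : P, x.coeff g))) := by
          simp only [map_sum]
          exact (map_sum (MonoidAlgebra.singleAddHom (1 : P)) _ _).symm
      _ = 0 := by rw [hxsum, map_zero, map_zero, MonoidAlgebra.single_zero]
  have hdvd : ∀ g : P, ∃ c : O, (x ^ p ^ n).coeff g = p * c := by
    intro g
    have h0 : mk ((x ^ p ^ n).coeff g) = 0 := by
      rw [← hφcoeff, key]; rfl
    have hmem : (x ^ p ^ n).coeff g ∈ (Ideal.span {(p : O)} : Ideal O) :=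
      Ideal.Quotient.eq_zero_iff_mem.mp h0
    rcases Ideal.mem_span_singleton.mp hmem with ⟨c, hc⟩
    exact ⟨c, hc⟩
  choose c hc using hdvd
  have hpne : (p : O) ≠ 0 := Nat.cast_ne_zero.mpr hp.ne_zero
  set y : MonoidAlgebra O P := ∑ g : P, MonoidAlgebra.single g (c g) with hydef
  have hxy : x ^ p ^ n = (p : MonoidAlgebra O P) * y := by
    rw [hydef, MonoidAlgebra.natCast_def, Finset.mul_sum]
    have hterm : ∀ g : P, MonoidAlgebra.single (1 : P) ((p : ℕ) : O)
        * MonoidAlgebra.single g (c g) = MonoidAlgebra.single g ((x ^ p ^ n).coeff g) := by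
      intro g
      rw [MonoidAlgebra.single_mul_single, one_mul, ← hc g]
    simp only [hterm]
    exact (stmt6_aux_sum_single _).symm
  refine ⟨y, ?_, hxy⟩
  have h1 : ε (x ^ p ^ n) = 0 := by
    rw [map_pow, show ε x = 0 from hx]
    exact zero_pow (pow_ne_zero n hp.ne_zero)
  have h2 : (p : O) * ε y = 0 := by
    have h3 := congrArg ε hxy
    rw [h1, map_mul, map_natCast] at h3
    exact h3.symm
  rcases mul_eq_zero.mp h2 with h | h
  · exact absurd h hpne
  · exact h
end

section
/- Let P = ⟨x⟩ be a cyclic group of order p^n and R any commutative ring. In the group ring RP, (1 - x)^{p^n - 1} ≡ 1 + x + x² + ... + x^{p^n - 1} modulo p·RP, and consequently (1 - x)^{p^n} ∈ p·(1 - x)·RP. -/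
lemma aux_poly (p n : ℕ) (hp : p.Prime) :
    ∃ g : Polynomial ℤ,
      ((1 : Polynomial ℤ) - Polynomial.X) ^ (p ^ n - 1) =
        (∑ i ∈ Finset.range (p ^ n), Polynomial.X ^ i) + (p : Polynomial ℤ) * g := by
  haveI := Fact.mk hp
  set N := p ^ n with hN
  have hNpos : 0 < N := pow_pos hp.pos n
  set q : Polynomial ℤ :=
    ((1 : Polynomial ℤ) - Polynomial.X) ^ (N - 1) - ∑ i ∈ Finset.range N, Polynomial.X ^ i with hq
  have hmap : q.map (Int.castRingHom (ZMod p)) = 0 := by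
    have key : ((1 : Polynomial (ZMod p)) - Polynomial.X) ^ (N - 1) =
        ∑ i ∈ Finset.range N, Polynomial.X ^ i := by
      have h1 : ((1 : Polynomial (ZMod p)) - Polynomial.X) *
          (((1 : Polynomial (ZMod p)) - Polynomial.X) ^ (N - 1)) =
          ((1 : Polynomial (ZMod p)) - Polynomial.X) ^ N := by
        rw [← pow_succ']
        congr 1
        omega
      have h2 : ((1 : Polynomial (ZMod p)) - Polynomial.X) ^ N =
          1 - Polynomial.X ^ N := by
        rw [hN, sub_pow_char_pow, one_pow]
      have h3 : ((1 : Polynomial (ZMod p)) - Polynomial.X) *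
          (∑ i ∈ Finset.range N, Polynomial.X ^ i) = 1 - Polynomial.X ^ N := by
        have := geom_sum_mul (Polynomial.X : Polynomial (ZMod p)) N
        linear_combination -this
      have hne : ((1 : Polynomial (ZMod p)) - Polynomial.X) ≠ 0 := by
        intro h
        have := congrArg (fun q => Polynomial.coeff q 1) h
        simp [Polynomial.coeff_one] at this
      exact mul_left_cancel₀ hne (by rw [h1, h2, h3])
    rw [hq]
    push_cast [Polynomial.map_sub, Polynomial.map_pow, Polynomial.map_one,
      Polynomial.map_X, Polynomial.map_sum]
    rw [key]
    ring
  have hdvd : (Polynomial.C (p : ℤ)) ∣ q := by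
    rw [Polynomial.C_dvd_iff_dvd_coeff]
    intro i
    have := congrArg (Polynomial.coeff · i) hmap
    simp only [Polynomial.coeff_map, Polynomial.coeff_zero] at this
    exact_mod_cast (ZMod.intCast_zmod_eq_zero_iff_dvd _ p).mp this
  obtain ⟨g, hg⟩ := hdvd
  have hC : ((p : ℕ) : Polynomial ℤ) = Polynomial.C ((p : ℕ) : ℤ) := by simp
  refine ⟨g, ?_⟩
  rw [hq] at hg
  linear_combination hg - g * hC

/-- for `P = ⟨x⟩ ≅ C_{p^n}` and any commutative ring `R`, in the group ring
`RP` one has `(1 - x)^{p^n - 1} ≡ 1 + x + ⋯ + x^{p^n - 1} (mod p·RP)`, and consequently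
`(1 - x)^{p^n} ∈ p·(1 - x)·RP`. -/
theorem stmt7 (p n : ℕ) (hp : p.Prime) (R : Type*) [CommRing R]
    (P : Type*) [CommGroup P] [Fintype P] (x : P)
    (hord : orderOf x = p ^ n) (hgen : Subgroup.zpowers x = (⊤ : Subgroup P)) :
    (∃ y : MonoidAlgebra R P,
        ((1 : MonoidAlgebra R P) - MonoidAlgebra.single x 1) ^ (p ^ n - 1) =
          (∑ i ∈ Finset.range (p ^ n), (MonoidAlgebra.single x (1 : R)) ^ i)
            + (p : MonoidAlgebra R P) * y) ∧
      ∃ z : MonoidAlgebra R P,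
        ((1 : MonoidAlgebra R P) - MonoidAlgebra.single x 1) ^ (p ^ n) =
          (p : MonoidAlgebra R P) * ((1 : MonoidAlgebra R P) - MonoidAlgebra.single x 1) * z := by
  obtain ⟨g, hg⟩ := aux_poly p n hp
  set A := MonoidAlgebra R P
  set X : A := MonoidAlgebra.single x 1 with hX
  have hXN : X ^ (p ^ n) = 1 := by
    rw [hX, MonoidAlgebra.single_pow, one_pow, ← hord, pow_orderOf_eq_one]
    rfl
  set φ : Polynomial ℤ →+* A := Polynomial.eval₂RingHom (Int.castRingHom A) X with hφ
  have hmain : ((1 : A) - X) ^ (p ^ n - 1) =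
      (∑ i ∈ Finset.range (p ^ n), X ^ i) + (p : A) * φ g := by
    have := congrArg φ hg
    simpa [hφ, map_pow, map_sub, map_one, map_mul, map_sum, map_natCast,
      Polynomial.eval₂_finset_sum, Polynomial.eval₂_pow, Polynomial.eval₂_X] using this
  refine ⟨⟨φ g, hmain⟩, ⟨φ g, ?_⟩⟩
  have hNpos : 0 < p ^ n := pow_pos hp.pos n
  have hsplit : ((1 : A) - X) ^ (p ^ n) = (1 - X) * (1 - X) ^ (p ^ n - 1) := by
    rw [← pow_succ']
    congr 1
    omega
  have hgeo : ((1 : A) - X) * (∑ i ∈ Finset.range (p ^ n), X ^ i) = 0 := by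
    have := geom_sum_mul X (p ^ n)
    have h2 : ((1 : A) - X) * (∑ i ∈ Finset.range (p ^ n), X ^ i) = 1 - X ^ (p ^ n) := by
      linear_combination -this
    rw [h2, hXN, sub_self]
  rw [hsplit, hmain, mul_add, hgeo, zero_add]
  ring
end

section
/- Let p = 2, let P be an elementary abelian 2-group with basis x₁,...,x_m, and O a complete discrete valuation ring of characteristic 0 with residue field of characteristic 2. For any a₁,...,a_m ∈ OP, one has (a₁(1-x₁) + ... + a_m(1-x_m))² ≡ 2a₁²(1-x₁) + ... + 2a_m²(1-x_m) modulo 2·J_{O,2}(P), where J_{O,2}(P) is the preimage in the augmentation ideal J_O(P) of J²(kP) under reduction to the residue field k. -/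
/-- Square of a sum in a commutative ring: diagonal plus twice the upper triangle. -/
lemma sq_sum_aux {R : Type*} [CommRing R] (m : ℕ) (s : Fin m → R) :
    (∑ i, s i) ^ 2 =
      ∑ i, (s i) ^ 2 + 2 * ∑ i, ∑ j ∈ Finset.Ioi i, s i * s j := by
  have hswap := Finset.sum_sum_Ioi_add_eq_sum_sum_off_diag (fun i j => s i * s j)
  have h1 : ∀ i : Fin m, ∑ j, s i * s j = s i * s i + ∑ j ∈ ({i}ᶜ : Finset (Fin m)), s i * s j := by
    intro i
    rw [← Finset.sum_compl_add_sum ({i} : Finset (Fin m)) (fun j => s i * s j),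
      Finset.sum_singleton, add_comm]
  calc (∑ i, s i) ^ 2 = ∑ i, ∑ j, s i * s j := by
        rw [sq, Finset.sum_mul_sum]
    _ = ∑ i, (s i * s i + ∑ j ∈ ({i}ᶜ : Finset (Fin m)), s i * s j) := by
        simp_rw [h1]
    _ = ∑ i, s i ^ 2 + ∑ i, ∑ j ∈ ({i}ᶜ : Finset (Fin m)), s j * s i := by
        rw [Finset.sum_add_distrib]
        congr 1
        · simp [sq]
        · exact Finset.sum_congr rfl fun i _ =>
            Finset.sum_congr rfl fun j _ => mul_comm _ _
    _ = ∑ i, s i ^ 2 + ∑ i, ∑ j ∈ Finset.Ioi i, (s j * s i + s i * s j) := by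
        congr 1
        convert hswap.symm using 4
    _ = ∑ i, s i ^ 2 + 2 * ∑ i, ∑ j ∈ Finset.Ioi i, s i * s j := by
        congr 1
        rw [Finset.mul_sum]
        refine Finset.sum_congr rfl fun i _ => ?_
        rw [Finset.mul_sum]
        refine Finset.sum_congr rfl fun j _ => ?_
        ring

/-- let `p = 2`, `P = (C₂)^m` with basis `x₁, …, x_m`, and `O` a complete
discrete valuation ring of mixed characteristic `(0,2)` with residue field `k`. For any
`a₁, …, a_m ∈ OP` one has
`(∑ aᵢ(1 - xᵢ))² ≡ ∑ 2aᵢ²(1 - xᵢ)  (mod 2·J_{O,2}(P))`,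
where `J_{O,2}(P)` is the set of elements of the augmentation ideal of `OP` whose reduction
to `kP` lies in `J(kP)²` (for `J(kP)` the augmentation ideal of `kP`). -/
theorem stmt8 (m : ℕ) (O : Type*) [CommRing O] [IsDomain O] [IsDiscreteValuationRing O]
    [CharZero O] [IsAdicComplete (IsLocalRing.maximalIdeal O) O]
    (hpO : ¬ IsUnit (2 : O)) :
    ∀ a : Fin m → MonoidAlgebra O (Fin m → Multiplicative (ZMod 2)),
      let P := Fin m → Multiplicative (ZMod 2)
      let x : Fin m → P := fun i => Pi.mulSingle i (Multiplicative.ofAdd (1 : ZMod 2))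
      let X : Fin m → MonoidAlgebra O P := fun i => MonoidAlgebra.single (x i) (1 : O)
      let k := IsLocalRing.ResidueField O
      let Jk : Ideal (MonoidAlgebra k P) :=
        RingHom.ker ((MonoidAlgebra.lift k k P) 1).toRingHom
      ∃ w : MonoidAlgebra O P,
        w ∈ RingHom.ker ((MonoidAlgebra.lift O O P) 1).toRingHom ∧
        (MonoidAlgebra.ofCoeff (Finsupp.mapRange (IsLocalRing.residue O) (map_zero _) w.coeff) : MonoidAlgebra k P)
            ∈ Jk * Jk ∧
        (∑ i, a i * ((1 : MonoidAlgebra O P) - X i)) ^ 2 =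
          (∑ i, 2 * (a i) ^ 2 * ((1 : MonoidAlgebra O P) - X i)) + 2 * w := by
  intro a P x X k Jk
  -- the residue-reduction algebra homomorphism
  let φ : MonoidAlgebra O P →ₐ[O] MonoidAlgebra k P :=
    (MonoidAlgebra.lift O (MonoidAlgebra k P) P) (MonoidAlgebra.of k P)
  have hφ : ∀ v : MonoidAlgebra O P,
      (MonoidAlgebra.ofCoeff (Finsupp.mapRange (IsLocalRing.residue O) (map_zero _) v.coeff) : MonoidAlgebra k P) = φ v := by
    intro v
    induction v using MonoidAlgebra.induction_linear with
    | zero => simp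
    | add u v hu hv =>
        rw [MonoidAlgebra.coeff_add, Finsupp.mapRange_add (map_add _), MonoidAlgebra.ofCoeff_add, hu, hv, map_add]
    | single g c =>
        rw [MonoidAlgebra.coeff_single, Finsupp.mapRange_single, MonoidAlgebra.ofCoeff_single]
        have : φ (MonoidAlgebra.single g c) = c • (MonoidAlgebra.of k P g) := by
          simp [φ, MonoidAlgebra.lift_single]
        have h2 : c • (MonoidAlgebra.of k P g) =
            MonoidAlgebra.single g (IsLocalRing.residue O c) := by
          rw [← algebraMap_smul k c (MonoidAlgebra.of k P g), MonoidAlgebra.of_apply,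
            MonoidAlgebra.smul_single', mul_one, IsLocalRing.ResidueField.algebraMap_eq]
        rw [this, h2]
  -- the candidate w
  set w : MonoidAlgebra O P :=
    ∑ i, ∑ j ∈ Finset.Ioi i, (a i * a j) * ((1 - X i) * (1 - X j)) with hw
  refine ⟨w, ?_, ?_, ?_⟩
  · -- augmentation of w is zero
    have haug : ∀ i, ((MonoidAlgebra.lift O O P) 1).toRingHom (1 - X i) = 0 := by
      intro i
      rw [map_sub, map_one]
      show (1 : O) - (MonoidAlgebra.lift O O P) 1 (MonoidAlgebra.single (x i) 1) = 0
      rw [MonoidAlgebra.lift_single]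
      simp
    rw [RingHom.mem_ker, hw, map_sum]
    refine Finset.sum_eq_zero fun i _ => ?_
    rw [map_sum]
    refine Finset.sum_eq_zero fun j _ => ?_
    rw [map_mul, map_mul, map_mul, haug i, zero_mul, mul_zero]
  · -- reduction of w lies in Jk * Jk
    rw [hφ]
    have hmem : ∀ i, φ (1 - X i) ∈ Jk := by
      intro i
      rw [RingHom.mem_ker]
      have : φ (1 - X i) = 1 - (MonoidAlgebra.single (x i) (1 : k) : MonoidAlgebra k P) := by
        rw [map_sub, map_one]
        congr 1
        show φ (MonoidAlgebra.single (x i) (1 : O)) = _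
        simp [φ, MonoidAlgebra.lift_single]
      rw [this, map_sub, map_one]
      show (1 : k) - (MonoidAlgebra.lift k k P) 1 (MonoidAlgebra.single (x i) 1) = 0
      rw [MonoidAlgebra.lift_single]
      simp
    rw [hw, map_sum]
    refine Ideal.sum_mem (Jk * Jk) fun i _ => ?_
    rw [map_sum]
    refine Ideal.sum_mem (Jk * Jk) fun j _ => ?_
    rw [map_mul, map_mul, map_mul]
    exact Ideal.mul_mem_left _ _ (Ideal.mul_mem_mul (hmem i) (hmem j))
  · -- the algebraic identity
    have hone : (Multiplicative.ofAdd (1 : ZMod 2)) * Multiplicative.ofAdd (1 : ZMod 2) = 1 := by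
      decide
    have hx2 : ∀ i, x i * x i = 1 := by
      intro i
      have hxi : x i = Pi.mulSingle i (Multiplicative.ofAdd (1 : ZMod 2)) := rfl
      rw [hxi, ← Pi.mulSingle_mul, hone, Pi.mulSingle_one]
    have hX2 : ∀ i, X i * X i = 1 := by
      intro i
      show MonoidAlgebra.single (x i) (1 : O) * MonoidAlgebra.single (x i) (1 : O) = 1
      rw [MonoidAlgebra.single_mul_single, hx2, mul_one]
      rfl
    have hsq : ∀ i, (a i * (1 - X i)) ^ 2 = 2 * (a i) ^ 2 * (1 - X i) := by
      intro i
      have : (1 - X i) * (1 - X i) = 2 * (1 - X i) := by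
        linear_combination hX2 i
      calc (a i * (1 - X i)) ^ 2 = (a i) ^ 2 * ((1 - X i) * (1 - X i)) := by ring
        _ = 2 * (a i) ^ 2 * (1 - X i) := by rw [this]; ring
    rw [sq_sum_aux m (fun i => a i * (1 - X i)), hw]
    refine congrArg₂ (· + ·) ?_ ?_
    · exact Finset.sum_congr rfl fun i _ => hsq i
    · refine congrArg (2 * ·) ?_
      exact Finset.sum_congr rfl fun i _ => Finset.sum_congr rfl fun j _ => by ring
end

section
/- Let E be a finite group with a central cyclic subgroup Z such that E/Z is abelian, and let φ be a faithful irreducible (hence linear) character of Z. If χ₁, χ₂ are irreducible characters of E lying over φ (i.e., whose restriction to Z is a multiple of φ), then there exists an irreducible character θ of E with Z in its kernel such that χ₁·θ = χ₂. -/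
open CategoryTheory LinearMap

noncomputable section

namespace Stmt9Aux

/-! ### Common eigenvector for a commuting family -/

lemma exists_common_eigenvector_aux {V : Type} [AddCommGroup V] [Module ℂ V]
    [FiniteDimensional ℂ V] {ι : Type} (f : ι → Module.End ℂ V)
    (hcomm : ∀ i j, Commute (f i) (f j)) (s : Finset ι) :
    ∀ W : Submodule ℂ V, W ≠ ⊥ → (∀ i ∈ s, ∀ w ∈ W, f i w ∈ W) →
      ∃ v, v ∈ W ∧ v ≠ 0 ∧ ∀ i ∈ s, ∃ c : ℂ, f i v = c • v := by
  classical
  induction s using Finset.induction_on with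
  | empty =>
      intro W hW _
      obtain ⟨v, hv, hv0⟩ := Submodule.exists_mem_ne_zero_of_ne_bot hW
      exact ⟨v, hv, hv0, by simp⟩
  | @insert j s hj ih =>
      intro W hW hinv
      have hWj : ∀ w ∈ W, f j w ∈ W := hinv j (Finset.mem_insert_self j s)
      set g : Module.End ℂ W := (f j).restrict hWj with hg
      haveI : Nontrivial W := Submodule.nontrivial_iff_ne_bot.mpr hW
      obtain ⟨μ, hμ⟩ := Module.End.exists_eigenvalue g
      obtain ⟨u, hu⟩ := hμ.exists_hasEigenvector
      have huV : f j (u : V) = μ • (u : V) := by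
        have h1 := hu.apply_eq_smul
        have h2 := congrArg (Subtype.val) h1
        simpa [hg, LinearMap.restrict_apply] using h2
      set W' : Submodule ℂ V := W ⊓ Module.End.eigenspace (f j) μ with hW'
      have hmem : (u : V) ∈ W' := ⟨u.2, Module.End.mem_eigenspace_iff.mpr huV⟩
      have hW'ne : W' ≠ ⊥ := by
        intro hbot
        have : (u : V) = 0 := by
          have := hmem
          rw [hbot] at this
          simpa using this
        exact hu.2 (Subtype.ext this)
      have hinv' : ∀ i ∈ s, ∀ w ∈ W', f i w ∈ W' := by
        intro i hi w hw
        refine ⟨hinv i (Finset.mem_insert_of_mem hi) w hw.1, ?_⟩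
        have hcw : f j (f i w) = f i (f j w) := by
          have := (hcomm j i).eq
          calc f j (f i w) = (f j * f i) w := rfl
            _ = (f i * f j) w := by rw [this]
            _ = f i (f j w) := rfl
        show (f i) w ∈ Module.End.eigenspace (f j) μ
        rw [Module.End.mem_eigenspace_iff]
        rw [hcw, Module.End.mem_eigenspace_iff.mp hw.2, map_smul]
      obtain ⟨v, hvW', hv0, hvs⟩ := ih W' hW'ne hinv'
      refine ⟨v, hvW'.1, hv0, ?_⟩
      intro i hi
      rcases Finset.mem_insert.mp hi with rfl | hi'
      · exact ⟨μ, Module.End.mem_eigenspace_iff.mp hvW'.2⟩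
      · exact hvs i hi'

lemma exists_common_eigenvector {G : Type} [Fintype G] {V : Type} [AddCommGroup V]
    [Module ℂ V] [FiniteDimensional ℂ V] [Nontrivial V] (f : G → Module.End ℂ V)
    (hcomm : ∀ i j, Commute (f i) (f j)) :
    ∃ v : V, v ≠ 0 ∧ ∀ g : G, ∃ c : ℂ, f g v = c • v := by
  have htop : (⊤ : Submodule ℂ V) ≠ ⊥ := by
    intro h
    obtain ⟨x, hx⟩ := exists_ne (0 : V)
    apply hx
    have : x ∈ (⊤ : Submodule ℂ V) := Submodule.mem_top
    rw [h] at this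
    simpa using this
  obtain ⟨v, _, hv0, hv⟩ := exists_common_eigenvector_aux f hcomm Finset.univ ⊤
    htop (by simp)
  exact ⟨v, hv0, fun g => hv g (Finset.mem_univ g)⟩

/-! ### Subrepresentations in `FDRep` -/

variable {G : Type} [Group G]

/-- The subrepresentation on an invariant submodule. -/
def subrep (W : FDRep ℂ G) (p : Submodule ℂ W) (hp : ∀ g : G, ∀ x ∈ p, W.ρ g x ∈ p) :
    FDRep ℂ G :=
  FDRep.of
    { toFun := fun g => (W.ρ g).restrict (hp g)
      map_one' := by
        ext x
        simp [LinearMap.restrict_apply]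
      map_mul' := by
        intro g h
        ext x
        simp [LinearMap.restrict_apply] }

/-- The inclusion of a subrepresentation. -/
def subrepIncl (W : FDRep ℂ G) (p : Submodule ℂ W) (hp : ∀ g : G, ∀ x ∈ p, W.ρ g x ∈ p) :
    subrep W p hp ⟶ W where
  hom := FGModuleCat.ofHom p.subtype
  comm := fun g => by
    ext x
    rfl

lemma mono_of_injective {X Y : FDRep ℂ G} (f : X ⟶ Y) (hf : Function.Injective f.hom) :
    Mono f := by
  constructor
  intro T a b h
  ext x
  have := congrArg (fun (m : T ⟶ Y) => m.hom x) h
  simp only [Action.comp_hom] at this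
  exact hf this

lemma isIso_of_bijective {X Y : FDRep ℂ G} (f : X ⟶ Y) (hf : Function.Bijective f.hom) :
    IsIso f := by
  let e : X ≃ₗ[ℂ] Y := LinearEquiv.ofBijective f.hom.hom.hom hf
  have he : ∀ x, e x = f.hom x := fun x => rfl
  have hcomm : ∀ (g : G) (x : X), f.hom (X.ρ g x) = Y.ρ g (f.hom x) := by
    intro g x
    exact congrArg (fun (m : X.V ⟶ Y.V) => ConcreteCategory.hom m x) (f.comm g)
  refine ⟨⟨{ hom := FGModuleCat.ofHom (e.symm : Y →ₗ[ℂ] X), comm := fun g => ?_ }, ?_, ?_⟩⟩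
  · ext y
    apply hf.1
    show f.hom (e.symm (Y.ρ g y)) = f.hom (X.ρ g (e.symm y))
    rw [hcomm g (e.symm y)]
    have h1 : f.hom (e.symm (Y.ρ g y)) = Y.ρ g y := by
      rw [← he]; exact e.apply_symm_apply _
    have h2 : f.hom (e.symm y) = y := by
      rw [← he]; exact e.apply_symm_apply _
    rw [h1, h2]
  · ext x
    show e.symm (f.hom x) = x
    rw [← he]; exact e.symm_apply_apply x
  · ext y
    show f.hom (e.symm y) = y
    rw [← he]; exact e.apply_symm_apply y

lemma invariant_bot_or_top (W : FDRep ℂ G) [Simple W] (p : Submodule ℂ W)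
    (hp : ∀ g : G, ∀ x ∈ p, W.ρ g x ∈ p) : p = ⊥ ∨ p = ⊤ := by
  by_cases hbot : p = ⊥
  · exact Or.inl hbot
  right
  haveI : Mono (subrepIncl W p hp) := mono_of_injective _ p.injective_subtype
  have hne : subrepIncl W p hp ≠ 0 := by
    intro h0
    obtain ⟨x, hx, hx0⟩ := Submodule.exists_mem_ne_zero_of_ne_bot hbot
    have : (subrepIncl W p hp).hom ⟨x, hx⟩ = 0 := by rw [h0, Action.zero_hom]; rfl
    exact hx0 this
  haveI : IsIso (subrepIncl W p hp) := isIso_of_mono_of_nonzero hne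
  have hsurj : Function.Surjective ((subrepIncl W p hp).hom) := by
    intro y
    have h := congrArg (fun (m : W ⟶ W) => m.hom y) (IsIso.inv_hom_id (subrepIncl W p hp))
    simp only [Action.comp_hom, Action.id_hom] at h
    exact ⟨(CategoryTheory.inv (subrepIncl W p hp)).hom y, h⟩
  have : LinearMap.range p.subtype = ⊤ := LinearMap.range_eq_top.mpr hsurj
  rw [Submodule.range_subtype] at this
  exact this

lemma nontrivial_of_simple (W : FDRep ℂ G) [Simple W] : Nontrivial W := by
  by_contra h
  rw [not_nontrivial_iff_subsingleton] at h
  apply CategoryTheory.id_nonzero W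
  haveI : Subsingleton ((forget (FGModuleCat ℂ)).obj W.V) := h
  ext x
  exact Subsingleton.elim _ _

lemma simple_of_invariant (W : FDRep ℂ G) (hnt : Nontrivial W)
    (h : ∀ p : Submodule ℂ W, (∀ g : G, ∀ x ∈ p, W.ρ g x ∈ p) → p = ⊥ ∨ p = ⊤) :
    Simple W := by
  constructor
  intro Y f hmono
  constructor
  · intro hiso h0
    have h1 : (𝟙 W : W ⟶ W) = CategoryTheory.inv f ≫ 0 := by
      rw [← h0]; exact (IsIso.inv_hom_id f).symm
    rw [Limits.comp_zero] at h1
    obtain ⟨x, hx⟩ := exists_ne (0 : W)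
    have := congrArg (fun (m : W ⟶ W) => m.hom x) h1.symm
    simp only [Action.zero_hom, Action.id_hom] at this
    exact hx this.symm
  · intro hne
    have hcomm : ∀ (g : G) (x : Y), f.hom.hom.hom (Y.ρ g x) = W.ρ g (f.hom.hom.hom x) := by
      intro g x
      exact congrArg (fun (m : Y.V ⟶ W.V) => ConcreteCategory.hom m x) (f.comm g)
    -- injectivity
    have hker : ∀ g : G, ∀ x ∈ LinearMap.ker f.hom.hom.hom, Y.ρ g x ∈ LinearMap.ker f.hom.hom.hom := by
      intro g x hx
      rw [LinearMap.mem_ker] at hx ⊢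
      have h := hcomm g x
      rw [hx, map_zero] at h
      exact h
    have hincl : subrepIncl Y _ hker ≫ f = 0 := by
      ext x
      show f.hom x.1 = 0
      have hx := x.2
      rw [LinearMap.mem_ker] at hx
      exact hx
    have hzero : subrepIncl Y _ hker = 0 := by
      have := hincl.trans (Limits.zero_comp (f := f)).symm
      exact (cancel_mono f).mp this
    have hkbot : LinearMap.ker f.hom.hom.hom = ⊥ := by
      rw [Submodule.eq_bot_iff]
      intro x hx
      have : (subrepIncl Y _ hker).hom ⟨x, hx⟩ = 0 := by rw [hzero, Action.zero_hom]; rfl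
      exact this
    -- surjectivity
    have hrange : ∀ g : G, ∀ x ∈ LinearMap.range f.hom.hom.hom, W.ρ g x ∈ LinearMap.range f.hom.hom.hom := by
      rintro g x ⟨y, rfl⟩
      exact ⟨Y.ρ g y, hcomm g y⟩
    rcases h _ hrange with hb | ht
    · exfalso
      apply hne
      ext x
      show f.hom x = 0
      have : f.hom x ∈ LinearMap.range f.hom.hom.hom := ⟨x, rfl⟩
      rw [hb] at this
      simpa using this
    · exact isIso_of_bijective f
        ⟨LinearMap.ker_eq_bot.mp hkbot, LinearMap.range_eq_top.mp ht⟩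

/-! ### Central elements act by scalars on simple representations -/

lemma central_scalar (W : FDRep ℂ G) [Simple W] (z : G) (hz : z ∈ Subgroup.center G) :
    ∃ c : ℂ, W.ρ z = c • (1 : W →ₗ[ℂ] W) := by
  let m : W ⟶ W :=
    { hom := FGModuleCat.ofHom (W.ρ z)
      comm := fun g => by
        ext x
        let g' : G := g
        have e1 : z * g' = g' * z := ((Subgroup.mem_center_iff.mp hz) g').symm
        have h1 : W.ρ z * W.ρ g' = W.ρ g' * W.ρ z := by
          rw [← map_mul, ← map_mul, e1]
        show (W.ρ z * W.ρ g') x = (W.ρ g' * W.ρ z) x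
        exact DFunLike.congr_fun h1 x }
  obtain ⟨c, hc⟩ := CategoryTheory.endomorphism_simple_eq_smul_id ℂ m
  refine ⟨c, ?_⟩
  have := congrArg (fun (m : W ⟶ W) => m.hom.hom.hom) hc
  simp only [Action.smul_hom, Action.id_hom] at this
  exact this.symm

/-! ### A central element with known character value acts by the expected scalar -/

lemma rho_eq_scalar (W : FDRep ℂ G) [Simple W] (z : G) (hz : z ∈ Subgroup.center G)
    (a : ℂ) (ha : W.character z = W.character 1 * a) :
    W.ρ z = a • (1 : W →ₗ[ℂ] W) := by
  obtain ⟨c, hc⟩ := central_scalar W z hz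
  haveI := nontrivial_of_simple W
  have hd : ((Module.finrank ℂ W : ℕ) : ℂ) ≠ 0 :=
    Nat.cast_ne_zero.mpr (Module.finrank_pos).ne'
  have htr : W.character z = c * ((Module.finrank ℂ W : ℕ) : ℂ) := by
    show LinearMap.trace ℂ _ (W.ρ z) = _
    rw [hc, map_smul, trace_one]
    rfl
  have h1 : W.character 1 = ((Module.finrank ℂ W : ℕ) : ℂ) := FDRep.char_one W
  rw [htr, h1] at ha
  have hca : c = a := by
    rw [mul_comm c] at ha
    exact mul_left_cancel₀ hd ha
  rw [hc, hca]

end Stmt9Aux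

end

/-- `χ : G → ℂ` is an irreducible character: it is the character of a simple
finite-dimensional complex representation of `G`. -/
def IsIrrChar (G : Type) [Group G] (χ : G → ℂ) : Prop :=
  ∃ V : FDRep ℂ G, CategoryTheory.Simple V ∧ χ = V.character

/-- let `E` be a finite group, `Z` a central cyclic subgroup with `E/Z`
abelian, and `φ` a faithful linear character of `Z`. If `χ₁, χ₂` are irreducible characters
of `E` lying over `φ`, then there is an irreducible character `θ` of `E` with `Z` in its
kernel such that `χ₁·θ = χ₂`. -/
theorem stmt9 (E : Type) [Group E] [Fintype E] (Z : Subgroup E) [Z.Normal]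
    (hZc : Z ≤ Subgroup.center E) (hZcyc : IsCyclic Z)
    (hab : ∀ a b : E ⧸ Z, a * b = b * a)
    (φ : Z →* ℂˣ) (hφ : Function.Injective φ)
    (χ₁ χ₂ : E → ℂ) (h1 : IsIrrChar E χ₁) (h2 : IsIrrChar E χ₂)
    (hov1 : ∀ z : Z, χ₁ (z : E) = χ₁ 1 * (φ z : ℂ))
    (hov2 : ∀ z : Z, χ₂ (z : E) = χ₂ 1 * (φ z : ℂ)) :
    ∃ θ : E → ℂ, IsIrrChar E θ ∧ (∀ z : Z, θ (z : E) = θ 1) ∧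
      ∀ g : E, χ₁ g * θ g = χ₂ g := by
  classical
  obtain ⟨V₁, hs1, hc1⟩ := h1
  obtain ⟨V₂, hs2, hc2⟩ := h2
  haveI := hs1
  haveI := hs2
  -- central elements of `Z` act by the scalar `φ z`
  have hsc1 : ∀ z : Z, V₁.ρ (z : E) = ((φ z : ℂ)) • (1 : V₁ →ₗ[ℂ] V₁) := by
    intro z
    apply Stmt9Aux.rho_eq_scalar V₁ (z : E) (hZc z.2)
    have h := hov1 z
    rw [hc1] at h
    exact h
  have hsc2 : ∀ z : Z, V₂.ρ (z : E) = ((φ z : ℂ)) • (1 : V₂ →ₗ[ℂ] V₂) := by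
    intro z
    apply Stmt9Aux.rho_eq_scalar V₂ (z : E) (hZc z.2)
    have h := hov2 z
    rw [hc2] at h
    exact h
  -- the conjugation representation on Hom(V₁, V₂)
  set ρH : Representation ℂ E (V₁ →ₗ[ℂ] V₂) := Representation.linHom V₁.ρ V₂.ρ with hρH
  -- `Z` acts trivially on it
  have hZ1 : ∀ z : Z, ρH (z : E) = 1 := by
    intro z
    ext f x
    show (ρH (z : E) f) x = f x
    rw [hρH, Representation.linHom_apply]
    have hzi : ((z : E))⁻¹ = ((z⁻¹ : Z) : E) := rfl
    set a : ℂ := (φ z : ℂ) with hadef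
    set b : ℂ := (φ z⁻¹ : ℂ) with hbdef
    have hab : a * b = 1 := by
      rw [hadef, hbdef, ← Units.val_mul, ← map_mul, mul_inv_cancel, map_one, Units.val_one]
    show V₂.ρ (z : E) (f (V₁.ρ ((z : E))⁻¹ x)) = f x
    rw [hzi, hsc1 z⁻¹, hsc2 z]
    show a • f (b • x) = f x
    rw [map_smul, smul_smul, hab, one_smul]
  -- the conjugation operators pairwise commute
  have hkey : ∀ g h : E, ρH (g * h) = ρH (h * g) := by
    intro g h
    have hzm : (h * g)⁻¹ * (g * h) ∈ Z := by
      apply QuotientGroup.eq.mp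
      show ((h * g : E) : E ⧸ Z) = ((g * h : E) : E ⧸ Z)
      rw [QuotientGroup.mk_mul, QuotientGroup.mk_mul, hab]
    have hd : g * h = (h * g) * ((h * g)⁻¹ * (g * h)) := (mul_inv_cancel_left _ _).symm
    rw [hd, map_mul, hZ1 ⟨_, hzm⟩, mul_one]
  have hcommF : ∀ g h : E, Commute (ρH g) (ρH h) := by
    intro g h
    show ρH g * ρH h = ρH h * ρH g
    rw [← map_mul, ← map_mul, hkey]
  -- Hom(V₁, V₂) is nontrivial
  haveI hnt1 := Stmt9Aux.nontrivial_of_simple V₁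
  haveI hnt2 := Stmt9Aux.nontrivial_of_simple V₂
  haveI : Nontrivial (V₁ →ₗ[ℂ] V₂) := by
    apply Module.nontrivial_of_finrank_pos (R := ℂ)
    rw [Module.finrank_linearMap]
    exact Nat.mul_pos Module.finrank_pos Module.finrank_pos
  -- common eigenvector
  obtain ⟨f₀, hf0, heig⟩ :=
    Stmt9Aux.exists_common_eigenvector (G := E) (fun g => ρH g) hcommF
  set θ : E → ℂ := fun g => Classical.choose (heig g) with hθdef
  have hθ : ∀ g : E, ρH g f₀ = θ g • f₀ := fun g => Classical.choose_spec (heig g)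
  have huniq : ∀ c d : ℂ, c • f₀ = d • f₀ → c = d := by
    intro c d h
    have hsub : (c - d) • f₀ = 0 := by rw [sub_smul, h, sub_self]
    rcases smul_eq_zero.mp hsub with h' | h'
    · exact sub_eq_zero.mp h'
    · exact absurd h' hf0
  have hθ1 : θ 1 = 1 := by
    apply huniq
    rw [← hθ 1, map_one, one_smul]
    rfl
  have hθmul : ∀ g h : E, θ (g * h) = θ g * θ h := by
    intro g h
    apply huniq
    rw [← hθ (g * h), map_mul]
    show ρH g (ρH h f₀) = (θ g * θ h) • f₀
    rw [hθ h, map_smul, hθ g, smul_smul, mul_comm (θ h)]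
  have hθZ : ∀ z : Z, θ (z : E) = 1 := by
    intro z
    apply huniq
    rw [← hθ (z : E), hZ1 z, one_smul]
    rfl
  have hθne : ∀ g : E, θ g ≠ 0 := by
    intro g h0
    have h := hθmul g g⁻¹
    rw [mul_inv_cancel, hθ1, h0, zero_mul] at h
    exact one_ne_zero h
  -- the key intertwining relation
  have hrel : ∀ (g : E) (x : V₁), V₂.ρ g (f₀ x) = θ g • f₀ (V₁.ρ g x) := by
    intro g x
    have hx : V₁.ρ g⁻¹ (V₁.ρ g x) = x := by
      have h : V₁.ρ g⁻¹ * V₁.ρ g = 1 := by rw [← map_mul, inv_mul_cancel, map_one]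
      exact DFunLike.congr_fun h x
    calc V₂.ρ g (f₀ x) = V₂.ρ g (f₀ (V₁.ρ g⁻¹ (V₁.ρ g x))) := by rw [hx]
      _ = (ρH g f₀) (V₁.ρ g x) := by rw [hρH, Representation.linHom_apply]; rfl
      _ = (θ g • f₀) (V₁.ρ g x) := by rw [hθ g]
      _ = θ g • f₀ (V₁.ρ g x) := rfl
  -- f₀ is injective
  have hker : ∀ g : E, ∀ x ∈ LinearMap.ker f₀, V₁.ρ g x ∈ LinearMap.ker f₀ := by
    intro g x hx
    rw [LinearMap.mem_ker] at hx ⊢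
    have h := hrel g x
    rw [hx, map_zero] at h
    exact ((smul_eq_zero.mp h.symm).resolve_left (hθne g))
  have hinj : Function.Injective f₀ := by
    rcases Stmt9Aux.invariant_bot_or_top V₁ _ hker with hb | ht
    · exact LinearMap.ker_eq_bot.mp hb
    · exact absurd (LinearMap.ker_eq_top.mp ht) hf0
  -- f₀ is surjective
  have hrg : ∀ g : E, ∀ x ∈ LinearMap.range f₀, V₂.ρ g x ∈ LinearMap.range f₀ := by
    rintro g x ⟨y, rfl⟩
    exact ⟨θ g • V₁.ρ g y, by rw [map_smul]; exact (hrel g y).symm⟩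
  have hsurj : Function.Surjective f₀ := by
    rcases Stmt9Aux.invariant_bot_or_top V₂ _ hrg with hb | ht
    · exact absurd (LinearMap.range_eq_bot.mp hb) hf0
    · exact LinearMap.range_eq_top.mp ht
  set e : V₁ ≃ₗ[ℂ] V₂ := LinearEquiv.ofBijective f₀ ⟨hinj, hsurj⟩ with hedef
  have he : ∀ x : V₁, e x = f₀ x := fun x => rfl
  -- character identity
  have hchar : ∀ g : E, V₂.character g = θ g * V₁.character g := by
    intro g
    have hρ : V₂.ρ g = θ g • (e.conj (V₁.ρ g)) := by
      ext y
      rw [LinearMap.smul_apply, LinearEquiv.conj_apply]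
      show V₂.ρ g y = θ g • (f₀ (V₁.ρ g (e.symm y)))
      have h := hrel g (e.symm y)
      rw [show f₀ (e.symm y) = y from by rw [← he]; exact e.apply_symm_apply y] at h
      exact h
    show LinearMap.trace ℂ _ (V₂.ρ g) = _
    rw [hρ, map_smul, trace_conj']
    rfl
  -- the one-dimensional representation with character θ
  have hsmulmul : ∀ g h : E, (θ (g * h)) • (1 : ℂ →ₗ[ℂ] ℂ) =
      (θ g • (1 : ℂ →ₗ[ℂ] ℂ)) * (θ h • (1 : ℂ →ₗ[ℂ] ℂ)) := by
    intro g h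
    rw [hθmul, smul_mul_smul_comm, one_mul]
  let ρθ : Representation ℂ E ℂ :=
    { toFun := fun g => θ g • (1 : ℂ →ₗ[ℂ] ℂ)
      map_one' := by show θ 1 • (1 : ℂ →ₗ[ℂ] ℂ) = 1; rw [hθ1, one_smul]
      map_mul' := hsmulmul }
  let L : FDRep ℂ E := FDRep.of ρθ
  haveI hLnt : Nontrivial L := inferInstanceAs (Nontrivial ℂ)
  haveI hLsimple : CategoryTheory.Simple L := by
    apply Stmt9Aux.simple_of_invariant L hLnt
    intro p hp
    by_cases hb : p = ⊥
    · exact Or.inl hb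
    · right
      obtain ⟨a, ha, ha0⟩ := Submodule.exists_mem_ne_zero_of_ne_bot hb
      rw [Submodule.eq_top_iff']
      intro x
      let x' : ℂ := x
      let a' : ℂ := a
      have ha0' : a' ≠ 0 := ha0
      have hx : x = (x' * a'⁻¹) • a := by
        show x' = (x' * a'⁻¹) * a'
        field_simp
      rw [hx]
      exact p.smul_mem _ ha
  have hLchar : ∀ g : E, L.character g = θ g := by
    intro g
    show LinearMap.trace ℂ ℂ (θ g • (1 : ℂ →ₗ[ℂ] ℂ)) = θ g
    rw [map_smul, trace_one, Module.finrank_self]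
    show θ g * ((1 : ℕ) : ℂ) = θ g
    rw [Nat.cast_one, mul_one]
  refine ⟨θ, ⟨L, hLsimple, funext fun g => (hLchar g).symm⟩, ?_, ?_⟩
  · intro z
    rw [hθZ z, hθ1]
  · intro g
    rw [hc1, hc2, hchar g]
    ring
end

section
/- Let E be a finite group with a central cyclic subgroup Z such that E/Z is abelian, and let φ be a faithful linear character of Z. Then for every g ∈ E \ Z(E), the sum over coset representatives h of C_E(g) in E of h^{-1}gh·e_φ equals g·(Σ_{z ∈ [g,E]} φ(z))·e_φ = 0 in the group algebra ℂE·e_φ; consequently the center of ℂE·e_φ equals ℂZ(E)·e_φ, where e_φ is the central idempotent of ℂZ corresponding to φ. -/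
/-- let `E` be a finite group, `Z` a central cyclic subgroup with `E/Z`
abelian and `φ` a faithful linear character of `Z`, with central idempotent
`e_φ = |Z|⁻¹ ∑_z φ(z⁻¹) z ∈ ℂE`. For every `g ∉ Z(E)`, the sum of the conjugates
`h⁻¹gh·e_φ` equals `g·(∑_{h} φ([g,h]))·e_φ`, and this is `0`; consequently the centre of
`ℂE·e_φ` is `ℂZ(E)·e_φ`. -/
theorem stmt10 (E : Type*) [Group E] [Fintype E] (Z : Subgroup E) [Fintype Z]
    (hZc : Z ≤ Subgroup.center E) (hZcyc : IsCyclic Z)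
    (hcomm : ∀ g h : E, g⁻¹ * h⁻¹ * g * h ∈ Z)
    (φ : Z →* ℂˣ) (hφ : Function.Injective φ) :
    let e : MonoidAlgebra ℂ E :=
      (Fintype.card Z : ℂ)⁻¹ •
        ∑ z : Z, ((φ z⁻¹ : ℂˣ) : ℂ) • MonoidAlgebra.single (z : E) (1 : ℂ)
    (∀ g : E, g ∉ Subgroup.center E →
      (∑ h : E, MonoidAlgebra.single (h⁻¹ * g * h) (1 : ℂ)) * e =
          MonoidAlgebra.single g (1 : ℂ) *
            ((∑ h : E, ((φ ⟨g⁻¹ * h⁻¹ * g * h, hcomm g h⟩ : ℂˣ) : ℂ)) • e) ∧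
        (∑ h : E, MonoidAlgebra.single (h⁻¹ * g * h) (1 : ℂ)) * e = 0) ∧
      ∀ a : MonoidAlgebra ℂ E, a * e = a →
        ((∀ b : MonoidAlgebra ℂ E, a * (b * e) = (b * e) * a) ↔
          a ∈ Submodule.span ℂ
            {v : MonoidAlgebra ℂ E | ∃ z ∈ Subgroup.center E,
              v = MonoidAlgebra.single z (1 : ℂ) * e}) := by
  intro e
  -- `e` commutes with everything
  have ecomm : ∀ x : MonoidAlgebra ℂ E, x * e = e * x := by
    intro x
    show x * ((Fintype.card Z : ℂ)⁻¹ • _) = ((Fintype.card Z : ℂ)⁻¹ • _) * x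
    rw [mul_smul_comm, smul_mul_assoc]
    congr 1
    rw [Finset.mul_sum, Finset.sum_mul]
    refine Finset.sum_congr rfl (fun z _ => ?_)
    rw [mul_smul_comm, smul_mul_assoc]
    congr 1
    exact (MonoidAlgebra.single_commute
      (fun a' => (Subgroup.mem_center_iff.mp (hZc z.2) a').symm)
      (fun b' => Commute.one_left b') x).eq.symm
  -- multiplication by `single z` for `z ∈ Z` scales `e` by `φ z`
  have singleZ_mul_e : ∀ z : Z,
      MonoidAlgebra.single (z : E) (1:ℂ) * e = ((φ z : ℂˣ) : ℂ) • e := by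
    intro z
    show MonoidAlgebra.single (z : E) (1:ℂ) * ((Fintype.card Z : ℂ)⁻¹ • _) =
      ((φ z : ℂˣ) : ℂ) • ((Fintype.card Z : ℂ)⁻¹ • _)
    rw [mul_smul_comm, smul_comm ((φ z : ℂˣ) : ℂ)]
    congr 1
    rw [Finset.mul_sum, Finset.smul_sum]
    refine Fintype.sum_equiv (Equiv.mulLeft z) _ _ (fun w => ?_)
    have hcz : z * (z * w)⁻¹ = w⁻¹ := by
      have hc := Subgroup.mem_center_iff.mp (hZc z.2) (w⁻¹ : E)
      ext
      push_cast
      rw [mul_inv_rev, ← mul_assoc, ← hc]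
      group
    have hu : ((φ z : ℂˣ) : ℂ) * ((φ (z * w)⁻¹ : ℂˣ) : ℂ) = ((φ w⁻¹ : ℂˣ) : ℂ) := by
      rw [← Units.val_mul, ← map_mul, hcz]
    rw [mul_smul_comm, MonoidAlgebra.single_mul_single, one_mul]
    simp only [Equiv.coe_mulLeft, smul_smul, hu, Subgroup.coe_mul]
  -- Part 1, first identity (valid for every g)
  have key1 : ∀ g : E,
      (∑ h : E, MonoidAlgebra.single (h⁻¹ * g * h) (1 : ℂ)) * e =
        MonoidAlgebra.single g (1 : ℂ) *
          ((∑ h : E, ((φ ⟨g⁻¹ * h⁻¹ * g * h, hcomm g h⟩ : ℂˣ) : ℂ)) • e) := by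
    intro g
    rw [Finset.sum_mul, Finset.sum_smul, Finset.mul_sum]
    refine Finset.sum_congr rfl (fun h _ => ?_)
    have hsplit : MonoidAlgebra.single g (1:ℂ) *
        MonoidAlgebra.single ((⟨g⁻¹ * h⁻¹ * g * h, hcomm g h⟩ : Z) : E) (1:ℂ) =
        MonoidAlgebra.single (h⁻¹ * g * h) (1:ℂ) := by
      rw [MonoidAlgebra.single_mul_single, one_mul]
      congr 1
      show g * (g⁻¹ * h⁻¹ * g * h) = h⁻¹ * g * h
      group
    rw [← hsplit, mul_assoc, singleZ_mul_e ⟨g⁻¹ * h⁻¹ * g * h, hcomm g h⟩]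
  -- the character sum vanishes for non-central g
  have sumchi : ∀ g : E, g ∉ Subgroup.center E →
      (∑ h : E, ((φ ⟨g⁻¹ * h⁻¹ * g * h, hcomm g h⟩ : ℂˣ) : ℂ)) = 0 := by
    intro g hg
    set k : E → ℂ := fun h => ((φ ⟨g⁻¹ * h⁻¹ * g * h, hcomm g h⟩ : ℂˣ) : ℂ) with hk
    have hmul : ∀ h1 h2 : E, k (h1 * h2) = k h1 * k h2 := by
      intro h1 h2
      have hcent := Subgroup.mem_center_iff.mp (hZc (hcomm g h1))
      have hE : g⁻¹ * (h1 * h2)⁻¹ * g * (h1 * h2) =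
          (g⁻¹ * h1⁻¹ * g * h1) * (g⁻¹ * h2⁻¹ * g * h2) := by
        have e1 : g⁻¹ * (h1 * h2)⁻¹ * g * (h1 * h2) =
            (g⁻¹ * h2⁻¹) * (g * (g⁻¹ * h1⁻¹ * g * h1)) * h2 := by group
        rw [e1, show (g⁻¹ * h2⁻¹) * (g * (g⁻¹ * h1⁻¹ * g * h1)) * h2 =
          (g⁻¹ * h2⁻¹ * g) * ((g⁻¹ * h1⁻¹ * g * h1) * h2) by group, ← hcent h2,
          show (g⁻¹ * h2⁻¹ * g) * (h2 * (g⁻¹ * h1⁻¹ * g * h1)) =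
            (g⁻¹ * h2⁻¹ * g * h2) * (g⁻¹ * h1⁻¹ * g * h1) by group,
          hcent (g⁻¹ * h2⁻¹ * g * h2)]
      have hZeq : (⟨g⁻¹ * (h1 * h2)⁻¹ * g * (h1 * h2), hcomm g (h1 * h2)⟩ : Z) =
          ⟨g⁻¹ * h1⁻¹ * g * h1, hcomm g h1⟩ * ⟨g⁻¹ * h2⁻¹ * g * h2, hcomm g h2⟩ := by
        ext; exact hE
      simp only [hk, hZeq, map_mul, Units.val_mul]
    -- find h₀ with k h₀ ≠ 1
    have hne : ∃ h0 : E, k h0 ≠ 1 := by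
      rw [Subgroup.mem_center_iff] at hg
      push_neg at hg
      obtain ⟨h0, hh0⟩ := hg
      refine ⟨h0, fun heq => hh0 ?_⟩
      have hone : (⟨g⁻¹ * h0⁻¹ * g * h0, hcomm g h0⟩ : Z) = 1 := by
        apply hφ
        rw [map_one]
        exact Units.ext heq
      have h3 : g⁻¹ * h0⁻¹ * g * h0 = 1 := congrArg Subtype.val hone
      have h5 : h0⁻¹ * g * h0 = g := by
        have h6 : h0⁻¹ * g * h0 = g * (g⁻¹ * h0⁻¹ * g * h0) := by group
        rw [h6, h3, mul_one]
      have h7 : h0 * (h0⁻¹ * g * h0) = g * h0 := by group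
      rw [h5] at h7
      exact h7
    obtain ⟨h0, hh0⟩ := hne
    have hS : k h0 * (∑ h : E, k h) = ∑ h : E, k h := by
      rw [Finset.mul_sum]
      calc ∑ h : E, k h0 * k h = ∑ h : E, k (h0 * h) := by
            refine Finset.sum_congr rfl (fun h _ => (hmul h0 h).symm)
        _ = ∑ h : E, k h := Equiv.sum_comp (Equiv.mulLeft h0) k
    have : (k h0 - 1) * (∑ h : E, k h) = 0 := by rw [sub_mul, hS, one_mul, sub_self]
    rcases mul_eq_zero.mp this with h | h
    · exact absurd (sub_eq_zero.mp h) hh0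
    · exact h
  -- Part 1, second identity
  have key2 : ∀ g : E, g ∉ Subgroup.center E →
      (∑ h : E, MonoidAlgebra.single (h⁻¹ * g * h) (1 : ℂ)) * e = 0 := by
    intro g hg
    rw [key1 g, sumchi g hg, zero_smul, mul_zero]
  refine ⟨fun g hg => ⟨key1 g, key2 g hg⟩, fun a ha => ⟨fun hcen => ?_, fun hspan b => ?_⟩⟩
  · -- forward: a central ⇒ a ∈ span
    have step : ∀ h : E, MonoidAlgebra.single h⁻¹ (1:ℂ) * a *
        (MonoidAlgebra.single h (1:ℂ) * e) = a := by
      intro h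
      have h1 : MonoidAlgebra.single (h⁻¹ : E) (1:ℂ) * MonoidAlgebra.single h (1:ℂ)
          = 1 := by
        rw [MonoidAlgebra.single_mul_single, inv_mul_cancel, one_mul,
          MonoidAlgebra.one_def]
      calc MonoidAlgebra.single h⁻¹ (1:ℂ) * a * (MonoidAlgebra.single h (1:ℂ) * e)
          = MonoidAlgebra.single h⁻¹ (1:ℂ) * (a * (MonoidAlgebra.single h (1:ℂ) * e)) := by
            rw [mul_assoc]
        _ = MonoidAlgebra.single h⁻¹ (1:ℂ) * ((MonoidAlgebra.single h (1:ℂ) * e) * a) := by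
            rw [hcen]
        _ = (MonoidAlgebra.single h⁻¹ (1:ℂ) * MonoidAlgebra.single h (1:ℂ)) * (e * a) := by
            simp only [mul_assoc]
        _ = e * a := by rw [h1, one_mul]
        _ = a := by rw [← ecomm a, ha]
    have expand : ∀ h : E, MonoidAlgebra.single h⁻¹ (1:ℂ) * a *
        (MonoidAlgebra.single h (1:ℂ) * e) =
        ∑ g : E, a.coeff g • (MonoidAlgebra.single (h⁻¹ * g * h) (1:ℂ) * e) := by
      intro h
      conv_lhs => rw [← show ∑ g : E, MonoidAlgebra.single g (a.coeff g) = a from by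
        conv_rhs => rw [← MonoidAlgebra.sum_coeff_single a]
        exact (Finsupp.sum_fintype _ _ (fun _ => MonoidAlgebra.single_zero _)).symm]
      rw [Finset.mul_sum, Finset.sum_mul]
      refine Finset.sum_congr rfl (fun g _ => ?_)
      have : MonoidAlgebra.single g (a.coeff g) =
          a.coeff g • MonoidAlgebra.single g (1:ℂ) := by
        rw [MonoidAlgebra.smul_single', mul_one]
      rw [this, mul_smul_comm, smul_mul_assoc]
      congr 1
      rw [MonoidAlgebra.single_mul_single, one_mul, ← mul_assoc,
        MonoidAlgebra.single_mul_single, one_mul]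
    have hsum : (Fintype.card E : ℂ) • a =
        ∑ g : E, a.coeff g • ((∑ h : E, MonoidAlgebra.single (h⁻¹ * g * h) (1:ℂ)) * e) := by
      calc (Fintype.card E : ℂ) • a = (Fintype.card E) • a := Nat.cast_smul_eq_nsmul ℂ _ a
        _ = ∑ h : E, MonoidAlgebra.single h⁻¹ (1:ℂ) * a *
              (MonoidAlgebra.single h (1:ℂ) * e) := by
            rw [Finset.sum_congr rfl (fun h _ => step h), Finset.sum_const,
              Finset.card_univ]
        _ = ∑ h : E, ∑ g : E, a.coeff g • (MonoidAlgebra.single (h⁻¹ * g * h) (1:ℂ) * e) := by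
            exact Finset.sum_congr rfl (fun h _ => expand h)
        _ = ∑ g : E, ∑ h : E, a.coeff g • (MonoidAlgebra.single (h⁻¹ * g * h) (1:ℂ) * e) :=
            Finset.sum_comm
        _ = ∑ g : E, a.coeff g • ((∑ h : E, MonoidAlgebra.single (h⁻¹ * g * h) (1:ℂ)) * e) := by
            refine Finset.sum_congr rfl (fun g _ => ?_)
            rw [Finset.sum_mul, Finset.smul_sum]
    have hcard : (Fintype.card E : ℂ) ≠ 0 := by
      exact_mod_cast Fintype.card_ne_zero
    have ha2 : a = (Fintype.card E : ℂ)⁻¹ •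
        ∑ g : E, a.coeff g • ((∑ h : E, MonoidAlgebra.single (h⁻¹ * g * h) (1:ℂ)) * e) := by
      rw [← hsum, smul_smul, inv_mul_cancel₀ hcard, one_smul]
    rw [ha2]
    refine Submodule.smul_mem _ _ (Submodule.sum_mem _ (fun g _ => ?_))
    by_cases hg : g ∈ Subgroup.center E
    · have hval : ∀ h : E, h⁻¹ * g * h = g := by
        intro h
        have := Subgroup.mem_center_iff.mp hg h⁻¹
        rw [this]; group
      have : (∑ h : E, MonoidAlgebra.single (h⁻¹ * g * h) (1:ℂ)) * e =
          (Fintype.card E : ℂ) • (MonoidAlgebra.single g (1:ℂ) * e) := by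
        rw [Finset.sum_congr rfl (fun h _ => by rw [hval h]), Finset.sum_const,
          Finset.card_univ, smul_mul_assoc, Nat.cast_smul_eq_nsmul]
      rw [this, smul_smul]
      exact Submodule.smul_mem _ _ (Submodule.subset_span ⟨g, hg, rfl⟩)
    · rw [key2 g hg, smul_zero]
      exact Submodule.zero_mem _
  · -- converse: span elements are central
    clear ha
    induction hspan using Submodule.span_induction with
    | mem x hx =>
        obtain ⟨z, hz, rfl⟩ := hx
        have cz : Commute (MonoidAlgebra.single z (1:ℂ)) (b * e) :=
          MonoidAlgebra.single_commute
            (fun a' => (Subgroup.mem_center_iff.mp hz a').symm)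
            (fun b' => Commute.one_left b') (b * e)
        have ce : Commute e (b * e) := (ecomm (b * e)).symm
        exact (Commute.mul_left cz ce).eq
    | zero => rw [zero_mul, mul_zero]
    | add x y hx hy ihx ihy => rw [add_mul, mul_add, ihx, ihy]
    | smul c x hx ih =>
        rw [smul_mul_assoc, ih]
        exact (mul_smul_comm c (b * e) x).symm
end

section
/- Let E be a finite group with central cyclic Z ≤ Z(E), E/Z abelian, φ a faithful linear character of Z, χ ∈ Irr(E, φ) and θ ∈ Irr(E, 1_Z) (an irreducible character with Z in its kernel). Then χ·θ = χ if and only if θ has Z(E) in its kernel and θ is linear, i.e., θ ∈ Irr(E, 1_{Z(E)}). -/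
open CategoryTheory Module

/-- A central element acts on a simple `FDRep` by a scalar, hence multiplies the
character. -/
lemma central_char {E : Type} [Group E] (V : FDRep ℂ E) (hV : Simple V) (z : E)
    (hz : ∀ g : E, g * z = z * g) :
    ∃ c : ℂ, ∀ g : E, V.character (g * z) = c * V.character g := by
  have : Simple V := hV
  let f : V ⟶ V := ⟨InducedCategory.homMk (ModuleCat.ofHom (V.ρ z)), by
    intro g
    ext v
    show V.ρ z (V.ρ g v) = V.ρ g (V.ρ z v)
    rw [← Module.End.mul_apply, ← Module.End.mul_apply, ← map_mul, ← map_mul, hz]⟩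
  obtain ⟨c, hc⟩ := endomorphism_simple_eq_smul_id ℂ f
  refine ⟨c, fun g => ?_⟩
  have hρ : V.ρ z = c • LinearMap.id := by
    have := congrArg (fun φ => φ.hom.hom.hom) hc
    exact this.symm
  show LinearMap.trace ℂ V (V.ρ (g * z)) = c * LinearMap.trace ℂ V (V.ρ g)
  have h2 : V.ρ g * (c • LinearMap.id) = c • V.ρ g := by
    rw [mul_smul_comm]; rfl
  rw [map_mul, hρ, h2, map_smul, smul_eq_mul]

/-- The character of a simple representation does not vanish at `1`. -/
lemma char_one_ne_zero {E : Type} [Group E] (V : FDRep ℂ E) (hV : Simple V) :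
    V.character 1 ≠ 0 := by
  have : Simple V := hV
  rw [FDRep.char_one]
  have hnt : Nontrivial V := by
    by_contra h
    have hs : Subsingleton V := not_nontrivial_iff_subsingleton.mp h
    apply CategoryTheory.id_nonzero V
    ext v
    exact @Subsingleton.elim _ hs _ _
  have : finrank ℂ V ≠ 0 := (Module.finrank_pos).ne'
  exact_mod_cast Nat.cast_ne_zero.mpr this

/-- let `E` be a finite group with central cyclic `Z`, `E/Z` abelian, `φ` a
faithful linear character of `Z`, `χ ∈ Irr(E, φ)` and `θ ∈ Irr(E, 1_Z)`. Then `χ·θ = χ` if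
and only if `θ ∈ Irr(E, 1_{Z(E)})`, i.e. `θ` has `Z(E)` in its kernel (and is then
linear). -/
theorem stmt12 (E : Type) [Group E] [Fintype E] (Z : Subgroup E)
    (hZc : Z ≤ Subgroup.center E) (hZcyc : IsCyclic Z)
    (hcomm : ∀ g h : E, g⁻¹ * h⁻¹ * g * h ∈ Z)
    (φ : Z →* ℂˣ) (hφ : Function.Injective φ)
    (χ : E → ℂ) (hχ : IsIrrChar E χ)
    (hχφ : ∀ z : Z, χ (z : E) = χ 1 * ((φ z : ℂˣ) : ℂ))
    (θ : E → ℂ) (hθ : IsIrrChar E θ) (hθZ : ∀ z : Z, θ (z : E) = θ 1) :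
    (∀ g : E, χ g * θ g = χ g) ↔
      (θ 1 = 1 ∧ ∀ z : Subgroup.center E, θ (z : E) = θ 1) := by
  obtain ⟨V, hVs, rfl⟩ := hχ
  have h1 : V.character 1 ≠ 0 := char_one_ne_zero V hVs
  -- χ is nonzero on the center
  have hcen : ∀ g : E, g ∈ Subgroup.center E → V.character g ≠ 0 := by
    intro g hg
    obtain ⟨c, hc⟩ := central_char V hVs g (fun h => (Subgroup.mem_center_iff.mp hg) h)
    have e1 : V.character 1 = c * V.character g⁻¹ := by
      have := hc g⁻¹; rwa [inv_mul_cancel] at this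
    have hcne : c ≠ 0 := by
      intro h; rw [h, zero_mul] at e1; exact h1 e1
    have e2 : V.character g = c * V.character 1 := by
      have := hc 1; rwa [one_mul] at this
    rw [e2]
    exact mul_ne_zero hcne h1
  -- χ vanishes off the center
  have hvan : ∀ g : E, g ∉ Subgroup.center E → V.character g = 0 := by
    intro g hg
    rw [Subgroup.mem_center_iff] at hg
    push_neg at hg
    obtain ⟨h, hh⟩ := hg
    set w : E := g⁻¹ * h⁻¹ * g * h with hw
    have hwZ : w ∈ Z := hcomm g h
    have hwZE : w ∈ Subgroup.center E := hZc hwZ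
    obtain ⟨c, hc⟩ := central_char V hVs w
      (fun k => (Subgroup.mem_center_iff.mp hwZE) k)
    -- identify c = φ ⟨w, hwZ⟩
    have e0 : V.character w = c * V.character 1 := by
      have := hc 1; rwa [one_mul] at this
    have e0' : V.character w = V.character 1 * ((φ ⟨w, hwZ⟩ : ℂˣ) : ℂ) := hχφ ⟨w, hwZ⟩
    have hcφ : c = ((φ ⟨w, hwZ⟩ : ℂˣ) : ℂ) := by
      have : c * V.character 1 = ((φ ⟨w, hwZ⟩ : ℂˣ) : ℂ) * V.character 1 := by
        rw [← e0, e0']; ring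
      exact mul_right_cancel₀ h1 this
    -- c ≠ 1 since w ≠ 1 and φ injective
    have hwne : w ≠ 1 := by
      intro h0
      apply hh
      rw [hw] at h0
      have key : g * h = h * g * (g⁻¹ * h⁻¹ * g * h) := by group
      rw [h0, mul_one] at key
      exact key.symm
    have hcne1 : c ≠ 1 := by
      rw [hcφ]
      intro h0
      apply hwne
      have : φ ⟨w, hwZ⟩ = 1 := Units.ext h0
      have := hφ (this.trans (map_one φ).symm)
      exact Subtype.ext_iff.mp this
    -- conjugation invariance : χ(g*w) = χ(g)
    have econj : V.character (g * w) = V.character g := by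
      have : g * w = h⁻¹ * g * (h⁻¹)⁻¹ := by rw [hw]; group
      rw [this, FDRep.char_conj]
    have heq : V.character g = c * V.character g := econj.symm.trans (hc g)
    by_contra hne
    have hone : (1 : ℂ) * V.character g = c * V.character g := by rw [one_mul]; exact heq
    exact hcne1 (mul_right_cancel₀ hne hone).symm
  constructor
  · intro hprod
    have key : ∀ g : E, g ∈ Subgroup.center E → θ g = 1 := by
      intro g hg
      exact mul_left_cancel₀ (hcen g hg) (by rw [hprod g, mul_one])
    have h1' : θ 1 = 1 := key 1 (Subgroup.one_mem _)
    exact ⟨h1', fun z => by rw [key z z.2, h1']⟩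
  · rintro ⟨hθ1, hθc⟩ g
    by_cases hg : g ∈ Subgroup.center E
    · rw [hθc ⟨g, hg⟩, hθ1, mul_one]
    · rw [hvan g hg, zero_mul]
end

section
/- Let H be a finite group, N a normal subgroup, and χ ∈ ℤIrr(N) a virtual character of N. Then for every g ∈ H, the value of the induced virtual character χ↑^H at g lies in [Stab_H(χ) : N]·O, where O is the ring of integers of a field containing the relevant character values (i.e., χ↑^H(g) is [Stab_H(χ):N] times an algebraic integer). -/
open scoped Classical

/-- The induced class function `f↑^G` of `f : H → ℂ`. -/
noncomputable def indChar {G : Type} [Group G] [Fintype G] (H : Subgroup G) (f : H → ℂ) :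
    G → ℂ :=
  fun g => (Nat.card H : ℂ)⁻¹ *
    ∑ x : G, if h : x * g * x⁻¹ ∈ H then f ⟨x * g * x⁻¹, h⟩ else 0

/-- The stabiliser in `H` of a class function `χ` of the normal subgroup `N`. -/
def charStab {H : Type} [Group H] (N : Subgroup H) (hN : N.Normal) (χ : ↥N → ℂ) :
    Subgroup H where
  carrier := {h : H | ∀ (n : H) (hn : n ∈ N) (hn' : h * n * h⁻¹ ∈ N),
    χ ⟨h * n * h⁻¹, hn'⟩ = χ ⟨n, hn⟩}
  one_mem' := by
    intro n hn hn'
    congr 1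
    exact Subtype.ext (by group)
  mul_mem' := by
    intro a b ha hb n hn hn'
    have hbn : b * n * b⁻¹ ∈ N := hN.conj_mem n hn b
    have h2 : a * (b * n * b⁻¹) * a⁻¹ ∈ N := hN.conj_mem _ hbn a
    have e1 : χ ⟨a * b * n * (a * b)⁻¹, hn'⟩ = χ ⟨a * (b * n * b⁻¹) * a⁻¹, h2⟩ := by
      congr 1
      exact Subtype.ext (by group)
    rw [e1, ha _ hbn h2, hb _ hn hbn]
  inv_mem' := by
    intro a ha n hn hn'
    have h3 : a * (a⁻¹ * n * a⁻¹⁻¹) * a⁻¹ ∈ N := by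
      have he : a * (a⁻¹ * n * a⁻¹⁻¹) * a⁻¹ = n := by group
      rw [he]
      exact hn
    have h4 := ha _ hn' h3
    rw [← h4]
    congr 1
    exact Subtype.ext (by group)

section Helpers
open Polynomial Matrix

lemma pow_root_integral' {μ : ℂ} {n : ℕ} (hn : n ≠ 0) (h : μ ^ n = 1) : IsIntegral ℤ μ := by
  refine ⟨X ^ n - 1, ?_, ?_⟩
  · simpa using monic_X_pow_sub_C (1 : ℤ) hn
  · simp [h]

lemma trace_integral' {m : Type} [Fintype m] [DecidableEq m] (M : Matrix m m ℂ) (n : ℕ)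
    (hn : n ≠ 0) (hM : M ^ n = 1) : IsIntegral ℤ M.trace := by
  rw [Matrix.trace_eq_sum_roots_charpoly]
  refine IsIntegral.multiset_sum ?_
  intro μ hμ
  have hroot : (Matrix.charpoly M).IsRoot μ :=
    (Polynomial.mem_roots (Matrix.charpoly_monic M).ne_zero).1 hμ
  have hdet0 := RingHom.map_det (Polynomial.evalRingHom μ) (charmatrix M)
  rw [RingHom.mapMatrix_apply] at hdet0
  have hdet : ((charmatrix M).map (Polynomial.evalRingHom μ)).det = 0 := by
    rw [← hdet0]; exact hroot
  have hmap : (charmatrix M).map (Polynomial.evalRingHom μ)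
      = Matrix.diagonal (fun _ => μ) - M := by
    ext i j
    by_cases h : i = j <;> simp [charmatrix_apply, Matrix.diagonal, h]
  rw [hmap] at hdet
  obtain ⟨v, hv0, hv⟩ := (Matrix.exists_mulVec_eq_zero_iff).2 hdet
  rw [sub_mulVec, sub_eq_zero] at hv
  have h2 : Matrix.diagonal (fun _ => μ) *ᵥ v = μ • v := by
    ext i; simp [Matrix.mulVec_diagonal]
  have heig : M *ᵥ v = μ • v := by rw [← hv, h2]
  have hpow : ∀ k : ℕ, (M ^ k) *ᵥ v = μ ^ k • v := by
    intro k
    induction k with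
    | zero => simp
    | succ k ih =>
      rw [pow_succ', ← Matrix.mulVec_mulVec, ih, Matrix.mulVec_smul, heig, smul_smul, pow_succ]
  have hfin := hpow n
  rw [hM, Matrix.one_mulVec] at hfin
  obtain ⟨i, hi⟩ := Function.ne_iff.1 hv0
  simp only [Pi.zero_apply] at hi
  have hvi := congrFun hfin i
  simp only [Pi.smul_apply, smul_eq_mul] at hvi
  have hone : μ ^ n = 1 := by
    have h3 : (μ ^ n - 1) * v i = 0 := by linear_combination -hvi
    rcases mul_eq_zero.1 h3 with h4 | h4
    · exact sub_eq_zero.1 h4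
    · exact absurd h4 hi
  exact pow_root_integral' hn hone

lemma char_integral' {G : Type} [Group G] [Fintype G] (V : FDRep ℂ G) (g : G) :
    IsIntegral ℤ (V.character g) := by
  classical
  let b := Module.finBasis ℂ V
  have hchar : V.character g = Matrix.trace (LinearMap.toMatrixAlgEquiv b (V.ρ g)) := by
    rw [FDRep.character, LinearMap.trace_eq_matrix_trace ℂ b]
    rfl
  rw [hchar]
  refine trace_integral' _ (Fintype.card G) Fintype.card_ne_zero ?_
  rw [← map_pow, ← map_pow, pow_card_eq_one, _root_.map_one, _root_.map_one]

lemma virt_integral' {G : Type} [Group G] [Fintype G] {χ : G → ℂ}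
    (hχ : ∃ (s : Finset (G → ℂ)) (c : (G → ℂ) → ℤ),
      (∀ f ∈ s, IsIrrChar G f) ∧ χ = ∑ f ∈ s, c f • f) (g : G) :
    IsIntegral ℤ (χ g) := by
  obtain ⟨s, c, hirr, rfl⟩ := hχ
  simp only [Finset.sum_apply, Pi.smul_apply, zsmul_eq_mul]
  refine IsIntegral.sum _ ?_
  intro f hf
  obtain ⟨V, _, rfl⟩ := hirr f hf
  exact (IsIntegral.mul (by exact_mod_cast isIntegral_algebraMap (R := ℤ) (x := c (V.character)))
    (char_integral' V g))

lemma virt_conj' {G : Type} [Group G] {χ : G → ℂ}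
    (hχ : ∃ (s : Finset (G → ℂ)) (c : (G → ℂ) → ℤ),
      (∀ f ∈ s, IsIrrChar G f) ∧ χ = ∑ f ∈ s, c f • f) (a b : G) :
    χ (a * b * a⁻¹) = χ b := by
  obtain ⟨s, c, hirr, rfl⟩ := hχ
  simp only [Finset.sum_apply, Pi.smul_apply]
  refine Finset.sum_congr rfl ?_
  intro f hf
  obtain ⟨V, _, rfl⟩ := hirr f hf
  rw [FDRep.char_conj]

end Helpers

/-- for a virtual character `χ ∈ ℤIrr(N)` of a normal subgroup `N` of a
finite group `H`, every value of the induced virtual character `χ↑^H` is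
`[Stab_H(χ) : N]` times an algebraic integer. -/
theorem stmt16 (H : Type) [Group H] [Fintype H] (N : Subgroup H) (hN : N.Normal)
    (χ : ↥N → ℂ)
    (hχ : ∃ (s : Finset (↥N → ℂ)) (c : (↥N → ℂ) → ℤ),
      (∀ f ∈ s, IsIrrChar ↥N f) ∧ χ = ∑ f ∈ s, c f • f) :
    ∀ g : H, ∃ α : ℂ, IsIntegral ℤ α ∧
      indChar N χ g = (N.relIndex (charStab N hN χ) : ℂ) * α := by
    classical
  intro g
  set S := charStab N hN χ with hS
  -- the stabiliser contains N
  have hmemS : ∀ {h : H}, h ∈ S →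
      ∀ (n : H) (hn : n ∈ N) (hn' : h * n * h⁻¹ ∈ N), χ ⟨h * n * h⁻¹, hn'⟩ = χ ⟨n, hn⟩ :=
    fun hh => hh
  have hNS : N ≤ S := by
    intro n hn
    intro m hm hm'
    have : (⟨n * m * n⁻¹, hm'⟩ : ↥N) = ⟨n, hn⟩ * ⟨m, hm⟩ * (⟨n, hn⟩ : ↥N)⁻¹ := by
      exact Subtype.ext rfl
    rw [this, virt_conj' hχ]
  by_cases hg : g ∈ N
  · -- main case
    have hmem : ∀ x : H, x⁻¹ * g * x ∈ N := by
      intro x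
      have := hN.conj_mem g hg x⁻¹
      simpa using this
    set F : H → ℂ := fun x => χ ⟨x⁻¹ * g * x, hmem x⟩ with hF
    -- rewrite the induced character sum using F
    have hsum1 : (∑ x : H, if h : x * g * x⁻¹ ∈ N then χ ⟨x * g * x⁻¹, h⟩ else 0)
        = ∑ x : H, F x := by
      refine Fintype.sum_equiv (Equiv.inv H) _ _ ?_
      intro x
      have hx : x * g * x⁻¹ ∈ N := by simpa using hmem x⁻¹
      rw [dif_pos hx]
      simp only [Equiv.inv_apply, hF]
      congr 1
      exact Subtype.ext (by group)
    -- F is constant on left cosets of S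
    have hconst : ∀ (x s : H), s ∈ S → F (x * s) = F x := by
      intro x s hs
      have hs' := S.inv_mem hs
      have hn' : s⁻¹ * (x⁻¹ * g * x) * s⁻¹⁻¹ ∈ N := by
        have := hmem (x * s)
        have he : (x * s)⁻¹ * g * (x * s) = s⁻¹ * (x⁻¹ * g * x) * s⁻¹⁻¹ := by group
        rwa [he] at this
      calc F (x * s) = χ ⟨s⁻¹ * (x⁻¹ * g * x) * s⁻¹⁻¹, hn'⟩ := by
            show χ _ = χ _
            congr 1
            exact Subtype.ext (by group)
        _ = χ ⟨x⁻¹ * g * x, hmem x⟩ := hmemS hs' _ (hmem x) hn'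
    -- sum over cosets
    have key : ∑ x : H, F x = (Nat.card ↥S : ℂ) * ∑ q : H ⧸ S, F q.out := by
      rw [← Fintype.sum_fiberwise (QuotientGroup.mk : H → H ⧸ S) F, Finset.mul_sum]
      refine Finset.sum_congr rfl ?_
      intro q _
      have hfib : ∀ x : {x : H // QuotientGroup.mk x = q}, F x = F q.out := by
        rintro ⟨x, hx⟩
        have hmemb : q.out⁻¹ * x ∈ S := by
          rw [← QuotientGroup.eq]
          rw [QuotientGroup.out_eq', hx]
        show F x = F q.out
        have h5 := hconst q.out (q.out⁻¹ * x) hmemb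
        simpa [mul_inv_cancel_left] using h5
      have e : ↥S ≃ {x : H // QuotientGroup.mk x = q} := by
        refine ⟨fun s => ⟨q.out * s, ?_⟩, fun x => ⟨q.out⁻¹ * x, ?_⟩, ?_, ?_⟩
        · rw [← QuotientGroup.out_eq' q, QuotientGroup.eq]
          set_option linter.unnecessarySimpa false in
          simpa using S.inv_mem s.2
        · rw [← QuotientGroup.eq, QuotientGroup.out_eq', x.2]
        · intro s; ext; simp
        · intro x; ext; simp
      calc (∑ x : {x : H // QuotientGroup.mk x = q}, F x)
          = ∑ _x : {x : H // QuotientGroup.mk x = q}, F q.out :=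
            Finset.sum_congr rfl fun x _ => hfib x
        _ = (Fintype.card {x : H // QuotientGroup.mk x = q} : ℂ) * F q.out := by
            rw [Finset.sum_const, nsmul_eq_mul, Finset.card_univ]
        _ = (Nat.card ↥S : ℂ) * F q.out := by
            rw [← Fintype.card_congr e, Nat.card_eq_fintype_card]
    -- cardinality arithmetic
    have hcard : (Nat.card ↥S : ℕ) = Nat.card ↥N * N.relIndex S := by
      have h1 := Subgroup.card_mul_index (N.subgroupOf S)
      have h2 : Nat.card ↥(N.subgroupOf S) = Nat.card ↥N :=
        Nat.card_congr (Subgroup.subgroupOfEquivOfLe hNS).toEquiv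
      rw [h2] at h1
      rw [← h1]
      rfl
    have hNne : (Nat.card ↥N : ℂ) ≠ 0 := by
      simp [Nat.card_eq_fintype_card, Fintype.card_ne_zero]
    refine ⟨∑ q : H ⧸ S, F q.out, ?_, ?_⟩
    · exact IsIntegral.sum _ fun q _ => virt_integral' hχ _
    · rw [indChar, hsum1, key, ← mul_assoc]
      congr 1
      rw [hcard]
      push_cast
      field_simp
  · -- g ∉ N : the induced character vanishes at g
    refine ⟨0, isIntegral_zero, ?_⟩
    rw [mul_zero, indChar]
    have : ∀ x : H, (if h : x * g * x⁻¹ ∈ N then χ ⟨x * g * x⁻¹, h⟩ else 0) = 0 := by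
      intro x
      rw [dif_neg]
      intro hx
      apply hg
      have := hN.conj_mem _ hx x⁻¹
      have he : x⁻¹ * (x * g * x⁻¹) * x⁻¹⁻¹ = g := by group
      rwa [he] at this
    rw [Finset.sum_congr rfl fun x _ => this x]
    simp
end
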